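/- arXiv:0910.1741 — 4 statements merged into one kernel-verified Lean document; each statement's English description precedes it below -/
import Mathlib

section
/- Let p ∈ [1,∞] and let q ∈ [1,∞] be its Hölder conjugate (1/p + 1/q = 1). If condition (C_p) holds, then condition (G_q) holds (condition (G_∞) in the case p = 1). No regularity assumption on (P_x) beyond weak continuity in x is required. -/
open MeasureTheory ENNReal NNReal Metric Set Filter

noncomputable section

namespace Kuwada

variable {X : Type*} [MetricSpace X] [MeasurableSpace X] [BorelSpace X]

/-- Every pair of points is joined by a constant-speed minimal geodesic for `dd`. -/
def GeodesicFor (dd : X → X → ℝ) : Prop :=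
  ∀ x y : X, ∃ γ : ℝ → X, γ 0 = x ∧ γ 1 = y ∧
    ∀ s ∈ Icc (0:ℝ) 1, ∀ t ∈ Icc (0:ℝ) 1, dd (γ s) (γ t) = |s - t| * dd x y

/-- `dd` is a continuous distance function on `X`. -/
structure IsContDist (dd : X → X → ℝ) : Prop where
  symm : ∀ x y, dd x y = dd y x
  triangle : ∀ x y z, dd x z ≤ dd x y + dd y z
  eq_zero_iff : ∀ x y, dd x y = 0 ↔ x = y
  cont : Continuous fun z : X × X => dd z.1 z.2

/-- `π` is a coupling of `μ` and `ν`. -/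
def IsCoupling (μ ν : Measure X) (π : Measure (X × X)) : Prop :=
  π.map Prod.fst = μ ∧ π.map Prod.snd = ν

/-- The cost `ρ^W_p (μ, ν)`: infimum of the `L^p (π)`-norm of `ρ` over couplings `π`. -/
def wCost (ρ : X → X → ℝ) (p : ℝ≥0∞) (μ ν : Measure X) : ℝ≥0∞ :=
  ⨅ (π : Measure (X × X)) (_ : IsCoupling μ ν π), eLpNorm (fun z => ρ z.1 z.2) p π

/-- `|∇_dd f| (x) = lim_{r ↓ 0} sup_{0 < dd x y ≤ r} |f x - f y| / dd x y`. -/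
def gradNorm (dd : X → X → ℝ) (f : X → ℝ) (x : X) : ℝ≥0∞ :=
  ⨅ (r : ℝ) (_ : 0 < r),
    ⨆ (y : X) (_ : 0 < dd x y ∧ dd x y ≤ r), ENNReal.ofReal (|f x - f y| / dd x y)

/-- `f ∈ C_{b,L} (X)`: bounded and Lipschitz (w.r.t. the metric `d`). -/
def BddLip (f : X → ℝ) : Prop :=
  (∃ C, ∀ x, |f x| ≤ C) ∧ (∃ K, LipschitzWith K f)

/-- `P f (x) = ∫ f dP_x`. -/
def heatOp (P : X → Measure X) (f : X → ℝ) (x : X) : ℝ := ∫ y, f y ∂ P x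

/-- `x ↦ P_x` is continuous w.r.t. the topology of weak convergence. -/
def WeaklyContinuous (P : X → Measure X) : Prop :=
  ∀ f : BoundedContinuousFunction X ℝ, Continuous fun x => ∫ y, f y ∂ P x

/-- Condition `(C_p)`. -/
def CondC (P : X → Measure X) (dt : X → X → ℝ) (p : ℝ≥0∞) : Prop :=
  ∀ μ ν : Measure X, IsProbabilityMeasure μ → IsProbabilityMeasure ν →
    wCost dist p (μ.bind P) (ν.bind P) ≤ wCost dt p μ ν

/-- Condition `(G_q)` for finite `q`. -/
def CondG (P : X → Measure X) (dt : X → X → ℝ) (q : ℝ) : Prop :=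
  ∀ f : X → ℝ, BddLip f → ∀ x : X,
    gradNorm dt (heatOp P f) x ≤ (∫⁻ y, gradNorm dist f y ^ q ∂ P x) ^ (1 / q)

/-- Condition `(G_∞)`. -/
def CondGInf (P : X → Measure X) (dt : X → X → ℝ) : Prop :=
  ∀ f : X → ℝ, BddLip f →
    (⨆ x, gradNorm dt (heatOp P f) x) ≤ ⨆ x, gradNorm dist f x

/-- `g` is an upper gradient of `f`. -/
def IsUpperGradient (f : X → ℝ) (g : X → ℝ≥0∞) : Prop :=
  ∀ l : ℝ, 0 ≤ l → ∀ γ : ℝ → X, HasUnitSpeedOn γ (Icc 0 l) →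
    ENNReal.ofReal |f (γ l) - f (γ 0)| ≤ ∫⁻ s in Icc (0:ℝ) l, g (γ s)

/-- local volume doubling. -/
def LocDoubling (v : Measure X) : Prop :=
  ∃ D : ℝ≥0, 0 < D ∧ ∃ R₁ : ℝ, 0 < R₁ ∧ ∀ (x : X) (r : ℝ), 0 < r → r < R₁ →
    v (ball x (2 * r)) ≤ (D : ℝ≥0∞) * v (ball x r)

/-- `(X, d, v)` supports a `(1, p₀)`-local Poincaré inequality. -/
def LocPoincare (v : Measure X) (p₀ : ℝ) : Prop :=
  ∀ R : ℝ, 0 < R → ∃ lam C_P : ℝ, 1 ≤ lam ∧ 0 < C_P ∧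
    ∀ f : X → ℝ, LocallyIntegrable f v → ∀ g : X → ℝ≥0∞, IsUpperGradient f g →
      ∀ (x : X) (r : ℝ), 0 < r → r < R →
        (∫⁻ y in ball x r,
          ENNReal.ofReal |f y - (v (ball x r)).toReal⁻¹ * ∫ z in ball x r, f z ∂v| ∂v)
        ≤ ENNReal.ofReal (C_P * r) * (∫⁻ y in ball x (lam * r), g y ^ p₀ ∂v) ^ (1 / p₀)

/-- Each `P_x` is absolutely continuous w.r.t. `v`, with density continuous in `x`. -/
def ContinuousDensity (P : X → Measure X) (v : Measure X) : Prop :=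
  ∃ k : X → X → ℝ≥0∞, (∀ x, P x = v.withDensity (k x)) ∧ ∀ y, Continuous fun x => k x y

/-- Assumption 2.2: existence of a positive Radon measure `v` with the stated properties. -/
def Regularity (P : X → Measure X) (v : Measure X) (p₀ : ℝ) : Prop :=
  IsLocallyFiniteMeasure v ∧ v.Regular ∧ LocDoubling v ∧
    1 ≤ p₀ ∧ LocPoincare v p₀ ∧ ContinuousDensity P v

end Kuwada

section KuwadaAux
open Kuwada Topology
set_option linter.unusedSectionVars false

namespace KuwadaProof

variable {X : Type*} [MetricSpace X] [MeasurableSpace X] [BorelSpace X]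

/-- the ε-slope function (with strict inequality, for measurability). -/
def gE (f : X → ℝ) (ε : ℝ) (z : X) : ℝ≥0∞ :=
  ⨆ (w : X) (_ : 0 < dist z w ∧ dist z w < ε), ENNReal.ofReal (|f z - f w| / dist z w)

lemma gE_antitone {f : X → ℝ} {ε₁ ε₂ : ℝ} (h : ε₁ ≤ ε₂) (z : X) : gE f ε₁ z ≤ gE f ε₂ z :=
  iSup₂_le fun w hw => le_iSup₂ (f := fun w _ => ENNReal.ofReal (|f z - f w| / dist z w)) w
    ⟨hw.1, lt_of_lt_of_le hw.2 h⟩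

lemma gE_le_coe {f : X → ℝ} {K : ℝ≥0} (hK : LipschitzWith K f) (ε : ℝ) (z : X) :
    gE f ε z ≤ (K : ℝ≥0∞) := by
  refine iSup₂_le fun w hw => ?_
  rw [← ENNReal.ofReal_coe_nnreal]
  refine ENNReal.ofReal_le_ofReal ?_
  rw [div_le_iff₀ hw.1]
  have := hK.dist_le_mul z w
  rwa [Real.dist_eq] at this

lemma abs_le_gE_mul {f : X → ℝ} {ε : ℝ} {a b : X} (h : dist a b < ε) :
    ENNReal.ofReal |f a - f b| ≤ gE f ε a * ENNReal.ofReal (dist a b) := by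
  rcases eq_or_ne a b with rfl | hab
  · simp
  · have hd : 0 < dist a b := dist_pos.2 hab
    have h1 : ENNReal.ofReal (|f a - f b| / dist a b) ≤ gE f ε a :=
      le_iSup₂ (f := fun w _ => ENNReal.ofReal (|f a - f w| / dist a w)) b ⟨hd, h⟩
    calc ENNReal.ofReal |f a - f b|
        = ENNReal.ofReal (|f a - f b| / dist a b) * ENNReal.ofReal (dist a b) := by
          rw [← ENNReal.ofReal_mul (by positivity), div_mul_cancel₀ _ hd.ne']
      _ ≤ gE f ε a * ENNReal.ofReal (dist a b) := mul_le_mul_left h1 _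

lemma gradNorm_dist_eq (f : X → ℝ) (z : X) :
    gradNorm dist f z = ⨅ n : ℕ, gE f (1 / (n + 1)) z := by
  refine le_antisymm (le_iInf fun n => ?_) ?_
  · have hn : (0:ℝ) < 1 / (2 * (n + 1)) := by positivity
    refine le_trans (iInf₂_le (1 / (2 * (n + 1) : ℝ)) hn) ?_
    refine iSup₂_le fun y hy => le_iSup₂ (f := fun w _ => ENNReal.ofReal (|f z - f w| / dist z w))
      y ⟨hy.1, lt_of_le_of_lt hy.2 ?_⟩
    rw [div_lt_div_iff₀ (by positivity) (by positivity)]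
    nlinarith [Nat.cast_nonneg (α := ℝ) n]
  · refine le_iInf₂ fun r hr => ?_
    obtain ⟨n, hn⟩ := exists_nat_one_div_lt hr
    refine le_trans (iInf_le _ n) ?_
    refine iSup₂_le fun w hw => le_iSup₂ (f := fun w _ => ENNReal.ofReal (|f z - f w| / dist z w))
      w ⟨hw.1, le_trans hw.2.le hn.le⟩

lemma measurable_gE [TopologicalSpace.SeparableSpace X] {f : X → ℝ} (hf : Continuous f) (ε : ℝ) :
    Measurable (gE f ε) := by
  obtain ⟨D, hDc, hDd⟩ := TopologicalSpace.exists_countable_dense X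
  have : Countable D := hDc.to_subtype
  have key : ∀ z, gE f ε z = ⨆ w : D, (if 0 < dist z w.1 ∧ dist z w.1 < ε then
      ENNReal.ofReal (|f z - f w.1| / dist z w.1) else 0) := by
    intro z
    refine le_antisymm (iSup₂_le fun w hw => ?_) (iSup_le fun w => ?_)
    · obtain ⟨u, hu_mem, hu_lim⟩ := mem_closure_iff_seq_limit.1 (hDd w)
      have hcont : ContinuousAt (fun v => ENNReal.ofReal (|f z - f v| / dist z v)) w := by
        refine ENNReal.continuous_ofReal.continuousAt.comp (ContinuousAt.div ?_ ?_ hw.1.ne')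
        · exact ((continuous_const.sub hf).abs).continuousAt
        · exact (continuous_const.dist continuous_id).continuousAt
      have hlim := hcont.tendsto.comp hu_lim
      have hdist : Filter.Tendsto (fun n => dist z (u n)) atTop (𝓝 (dist z w)) :=
        ((continuous_const.dist continuous_id).continuousAt.tendsto.comp hu_lim)
      have hev : ∀ᶠ n in atTop, dist z (u n) ∈ Ioo (0:ℝ) ε :=
        hdist.eventually (isOpen_Ioo.eventually_mem ⟨hw.1, hw.2⟩)
      refine le_of_tendsto hlim ?_
      filter_upwards [hev] with n hn
      have h2 := le_iSup (fun w : D => if 0 < dist z w.1 ∧ dist z w.1 < ε then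
        ENNReal.ofReal (|f z - f w.1| / dist z w.1) else 0) (⟨u n, hu_mem n⟩ : D)
      simpa [if_pos (show 0 < dist z (u n) ∧ dist z (u n) < ε from ⟨hn.1, hn.2⟩)] using h2
    · split_ifs with hcond
      · exact le_iSup₂ (f := fun v _ => ENNReal.ofReal (|f z - f v| / dist z v)) (w.1) hcond
      · exact zero_le
  rw [show gE f ε = fun z => ⨆ w : D, (if 0 < dist z w.1 ∧ dist z w.1 < ε then
      ENNReal.ofReal (|f z - f w.1| / dist z w.1) else 0) from funext key]
  refine Measurable.iSup fun w => ?_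
  have hdz : Measurable fun z => dist z (w.1 : X) := (continuous_id.dist continuous_const).measurable
  refine Measurable.ite ?_ ?_ measurable_const
  · have : {z : X | 0 < dist z w.1 ∧ dist z w.1 < ε}
        = {z : X | 0 < dist z w.1} ∩ {z : X | dist z w.1 < ε} := rfl
    rw [this]
    exact (measurableSet_lt measurable_const hdz).inter (measurableSet_lt hdz measurable_const)
  · exact ENNReal.measurable_ofReal.comp (((hf.measurable.sub measurable_const).abs).div hdz)

lemma iInf_rpow_const {ι : Sort*} [Nonempty ι] (a : ι → ℝ≥0∞) {c : ℝ} (hc : 0 < c) :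
    (⨅ i, a i) ^ c = ⨅ i, a i ^ c :=
  map_iInf (ENNReal.orderIsoRpow c hc) a

end KuwadaProof
end KuwadaAux
section KuwadaAux2
open Kuwada Topology
set_option linter.unusedSectionVars false

namespace KuwadaProof

variable {X : Type*} [MetricSpace X] [MeasurableSpace X] [BorelSpace X]

lemma contDist_nonneg {dt : X → X → ℝ} (hdt : IsContDist dt) (x y : X) : 0 ≤ dt x y := by
  have h0 : dt x x = 0 := (hdt.eq_zero_iff x x).2 rfl
  have h := hdt.triangle x y x
  rw [h0, hdt.symm y x] at h
  linarith

lemma bind_dirac_eq (P : X → Measure X) (x : X) : (Measure.dirac x).bind P = P x := by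
  have h : P =ᵐ[Measure.dirac x] fun _ => P x := by
    rw [MeasureTheory.ae_dirac_eq]
    exact Filter.eventually_pure.2 rfl
  rw [Measure.bind, Measure.map_congr h, Measure.map_const, measure_univ, one_smul,
    Measure.join_dirac]

lemma wCost_dirac_le [TopologicalSpace.SeparableSpace X] {dt : X → X → ℝ} (hdt : IsContDist dt)
    {p : ℝ≥0∞} (hp : p ≠ 0) (x y : X) :
    wCost dt p (Measure.dirac x) (Measure.dirac y) ≤ ENNReal.ofReal (dt x y) := by
  haveI := UniformSpace.secondCountable_of_separable X
  have hcoup : IsCoupling (Measure.dirac x) (Measure.dirac y) (Measure.dirac (x, y)) :=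
    ⟨Measure.map_dirac' measurable_fst _, Measure.map_dirac' measurable_snd _⟩
  refine le_trans (iInf₂_le _ hcoup) ?_
  have hmeas : Measurable fun z : X × X => dt z.1 z.2 := hdt.cont.measurable
  have hnorm : ‖dt x y‖ₑ = ENNReal.ofReal (dt x y) :=
    Real.enorm_eq_ofReal (contDist_nonneg hdt x y)
  rcases eq_or_ne p ∞ with rfl | hptop
  · rw [eLpNorm_exponent_top, eLpNormEssSup]
    refine essSup_le_of_ae_le _ ?_
    rw [MeasureTheory.ae_dirac_eq]
    exact Filter.eventually_pure.2 hnorm.le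
  · rw [eLpNorm_eq_lintegral_rpow_enorm_toReal hp hptop,
      lintegral_dirac' _ (hmeas.enorm.pow_const _), ← ENNReal.rpow_mul,
      mul_one_div_cancel (ENNReal.toReal_ne_zero.2 ⟨hp, hptop⟩), ENNReal.rpow_one, hnorm]

lemma exists_coupling_lt [TopologicalSpace.SeparableSpace X] {dt : X → X → ℝ} (hdt : IsContDist dt) {P : X → Measure X} {p : ℝ≥0∞}
    (hp : p ≠ 0) (hC : CondC P dt p) (x y : X) {c : ℝ≥0∞} (hc : ENNReal.ofReal (dt x y) < c) :
    ∃ π : Measure (X × X), π.map Prod.fst = P x ∧ π.map Prod.snd = P y ∧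
      eLpNorm (fun z : X × X => dist z.1 z.2) p π < c := by
  have h := hC (Measure.dirac x) (Measure.dirac y) inferInstance inferInstance
  rw [bind_dirac_eq, bind_dirac_eq] at h
  have h2 : wCost dist p (P x) (P y) < c :=
    lt_of_le_of_lt (h.trans (wCost_dirac_le hdt hp x y)) hc
  rw [wCost] at h2
  simp only [iInf_lt_iff] at h2
  obtain ⟨π, hcoup, hlt⟩ := h2
  exact ⟨π, hcoup.1, hcoup.2, hlt⟩

lemma isProb_of_fst_map {P : X → Measure X} {x : X} [IsProbabilityMeasure (P x)]
    {π : Measure (X × X)} (h1 : π.map Prod.fst = P x) : IsProbabilityMeasure π := by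
  constructor
  have h2 : π.map Prod.fst univ = 1 := by rw [h1]; exact measure_univ
  rwa [Measure.map_apply measurable_fst MeasurableSet.univ, preimage_univ] at h2

lemma ofReal_abs_heatOp_sub_le [TopologicalSpace.SeparableSpace X] {P : X → Measure X} {f : X → ℝ} {C : ℝ} (hfc : Continuous f)
    (hfb : ∀ z, |f z| ≤ C) {x y : X} (hx : IsProbabilityMeasure (P x))
    {π : Measure (X × X)} (h1 : π.map Prod.fst = P x) (h2 : π.map Prod.snd = P y) :
    ENNReal.ofReal |heatOp P f x - heatOp P f y| ≤ ∫⁻ z, ENNReal.ofReal |f z.1 - f z.2| ∂π := by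
  haveI := UniformSpace.secondCountable_of_separable X
  have hπ : IsProbabilityMeasure π := isProb_of_fst_map h1
  have hint1 : Integrable (fun z : X × X => f z.1) π := by
    refine Integrable.mono' (integrable_const C) ((hfc.comp continuous_fst).aestronglyMeasurable) ?_
    exact ae_of_all _ fun z => by simpa [Real.norm_eq_abs] using hfb z.1
  have hint2 : Integrable (fun z : X × X => f z.2) π := by
    refine Integrable.mono' (integrable_const C) ((hfc.comp continuous_snd).aestronglyMeasurable) ?_
    exact ae_of_all _ fun z => by simpa [Real.norm_eq_abs] using hfb z.2
  have e1 : heatOp P f x = ∫ z : X × X, f z.1 ∂π := by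
    rw [heatOp, ← h1, integral_map measurable_fst.aemeasurable hfc.aestronglyMeasurable]
  have e2 : heatOp P f y = ∫ z : X × X, f z.2 ∂π := by
    rw [heatOp, ← h2, integral_map measurable_snd.aemeasurable hfc.aestronglyMeasurable]
  rw [e1, e2, ← integral_sub hint1 hint2]
  calc ENNReal.ofReal |∫ z : X × X, (f z.1 - f z.2) ∂π|
      = (‖∫ z : X × X, (f z.1 - f z.2) ∂π‖₊ : ℝ≥0∞) := (Real.enorm_eq_ofReal_abs _).symm
    _ ≤ ∫⁻ z, (‖f z.1 - f z.2‖₊ : ℝ≥0∞) ∂π := enorm_integral_le_lintegral_enorm _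
    _ = ∫⁻ z, ENNReal.ofReal |f z.1 - f z.2| ∂π := by
        exact lintegral_congr fun z => Real.enorm_eq_ofReal_abs _

lemma ofReal_abs_sub_le_lip {f : X → ℝ} {K : ℝ≥0} (hK : LipschitzWith K f) (a b : X) :
    ENNReal.ofReal |f a - f b| ≤ (K : ℝ≥0∞) * ENNReal.ofReal (dist a b) := by
  have h := hK.dist_le_mul a b
  rw [Real.dist_eq] at h
  calc ENNReal.ofReal |f a - f b| ≤ ENNReal.ofReal ((K : ℝ) * dist a b) :=
        ENNReal.ofReal_le_ofReal h
    _ = ENNReal.ofReal (K : ℝ) * ENNReal.ofReal (dist a b) := ENNReal.ofReal_mul K.coe_nonneg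
    _ = (K : ℝ≥0∞) * ENNReal.ofReal (dist a b) := by rw [ENNReal.ofReal_coe_nnreal]

end KuwadaProof
end KuwadaAux2
section KuwadaAux3
open Kuwada Topology
set_option linter.unusedSectionVars false

namespace KuwadaProof

variable {X : Type*} [MetricSpace X] [MeasurableSpace X] [BorelSpace X]

lemma abs_sub_le_iSup_gradNorm (hgeo : GeodesicFor (dist : X → X → ℝ)) (f : X → ℝ) (a b : X) :
    ENNReal.ofReal |f a - f b| ≤ (⨆ z, gradNorm dist f z) * ENNReal.ofReal (dist a b) := by
  set S := ⨆ z, gradNorm dist f z with hS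
  rcases eq_or_ne a b with rfl | hab
  · simp
  have hd : 0 < dist a b := dist_pos.2 hab
  rcases eq_or_ne S ∞ with hStop | hSfin
  · rw [hStop, ENNReal.top_mul (ENNReal.ofReal_pos.2 hd).ne']
    exact le_top
  have key : ∀ c' : ℝ, S.toReal < c' → |f a - f b| ≤ c' * dist a b := by
    intro c' hc'
    have hc'0 : 0 < c' := lt_of_le_of_lt ENNReal.toReal_nonneg hc'
    obtain ⟨γ, hγ0, hγ1, hγd⟩ := hgeo a b
    set D := dist a b with hD
    -- local estimate
    have hloc : ∀ t ∈ Icc (0:ℝ) 1, ∃ δ > (0:ℝ), ∀ s ∈ Icc (0:ℝ) 1,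
        |s - t| ≤ δ → |f (γ s) - f (γ t)| ≤ c' * D * |s - t| := by
      intro t ht
      have h1 : gradNorm dist f (γ t) < ENNReal.ofReal c' := by
        refine lt_of_le_of_lt (le_iSup (fun z => gradNorm dist f z) (γ t)) ?_
        rw [← hS]
        exact (ENNReal.lt_ofReal_iff_toReal_lt hSfin).2 hc'
      rw [gradNorm] at h1
      simp only [iInf_lt_iff] at h1
      obtain ⟨r, hr, hsup⟩ := h1
      refine ⟨r / D, by positivity, fun s hs hst => ?_⟩
      have hdist : dist (γ s) (γ t) = |s - t| * D := hγd s hs t ht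
      have hds : dist (γ s) (γ t) ≤ r := by
        rw [hdist]
        calc |s - t| * D ≤ (r / D) * D := mul_le_mul_of_nonneg_right hst hd.le
          _ = r := div_mul_cancel₀ _ hd.ne'
      rcases eq_or_ne (γ s) (γ t) with hEq | hNe
      · rw [hEq, sub_self, abs_zero]
        positivity
      · have hpos : 0 < dist (γ t) (γ s) := dist_pos.2 (Ne.symm hNe)
        have hmem : ENNReal.ofReal (|f (γ t) - f (γ s)| / dist (γ t) (γ s))
            ≤ ⨆ (y : X) (_ : 0 < dist (γ t) y ∧ dist (γ t) y ≤ r),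
              ENNReal.ofReal (|f (γ t) - f y| / dist (γ t) y) :=
          le_iSup₂ (f := fun y _ => ENNReal.ofReal (|f (γ t) - f y| / dist (γ t) y)) (γ s)
            ⟨hpos, by rwa [dist_comm]⟩
        have hlt2 := lt_of_le_of_lt hmem hsup
        have h3 := (ENNReal.ofReal_lt_ofReal_iff hc'0).1 hlt2
        have h4 := (div_lt_iff₀ hpos).1 h3
        calc |f (γ s) - f (γ t)| = |f (γ t) - f (γ s)| := abs_sub_comm _ _
          _ ≤ c' * dist (γ t) (γ s) := h4.le
          _ = c' * (|s - t| * D) := by rw [dist_comm, hdist]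
          _ = c' * D * |s - t| := by ring
    -- global statement by a sSup argument
    set h : ℝ → ℝ := fun t => f (γ t) with hh
    set A : Set ℝ := {t | t ∈ Icc (0:ℝ) 1 ∧ |h t - h 0| ≤ c' * D * t} with hA
    have hA0 : (0:ℝ) ∈ A := ⟨⟨le_refl 0, zero_le_one⟩, by simp⟩
    have hAbdd : BddAbove A := ⟨1, fun t ht => ht.1.2⟩
    have hAne : A.Nonempty := ⟨0, hA0⟩
    set T := sSup A with hT
    have hT0 : 0 ≤ T := le_csSup hAbdd hA0
    have hT1 : T ≤ 1 := csSup_le hAne fun t ht => ht.1.2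
    obtain ⟨δ, hδ, hloc'⟩ := hloc T ⟨hT0, hT1⟩
    have hTA : T ∈ A := by
      obtain ⟨t, htA, htlt⟩ := exists_lt_of_lt_csSup hAne (show T - δ < T by linarith)
      have htT : t ≤ T := le_csSup hAbdd htA
      refine ⟨⟨hT0, hT1⟩, ?_⟩
      have hest := hloc' t htA.1 (by rw [abs_sub_le_iff]; constructor <;> linarith)
      calc |h T - h 0| ≤ |h T - h t| + |h t - h 0| := abs_sub_le _ _ _
        _ = |h t - h T| + |h t - h 0| := by rw [abs_sub_comm]
        _ ≤ c' * D * |t - T| + c' * D * t := add_le_add hest htA.2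
        _ = c' * D * (T - t) + c' * D * t := by
            rw [abs_of_nonpos (by linarith), neg_sub]
        _ = c' * D * T := by ring
    have hT_eq : T = 1 := by
      by_contra hne
      have hTlt : T < 1 := lt_of_le_of_ne hT1 hne
      set T' := min 1 (T + δ) with hT'
      have hTT' : T < T' := lt_min hTlt (by linarith)
      have hT'mem : T' ∈ Icc (0:ℝ) 1 := ⟨by positivity, min_le_left _ _⟩
      have hdd : |T' - T| ≤ δ := by
        rw [abs_of_nonneg (by linarith)]
        have := min_le_right 1 (T + δ)
        linarith
      have hest := hloc' T' hT'mem hdd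
      have hT'A : T' ∈ A := by
        refine ⟨hT'mem, ?_⟩
        calc |h T' - h 0| ≤ |h T' - h T| + |h T - h 0| := abs_sub_le _ _ _
          _ ≤ c' * D * |T' - T| + c' * D * T := add_le_add hest hTA.2
          _ = c' * D * (T' - T) + c' * D * T := by rw [abs_of_nonneg (by linarith)]
          _ = c' * D * T' := by ring
      have := le_csSup hAbdd hT'A
      linarith
    have hfin := hTA.2
    rw [hT_eq] at hfin
    calc |f a - f b| = |h 1 - h 0| := by rw [hh]; simp only [hγ0, hγ1]; rw [abs_sub_comm]
      _ ≤ c' * D * 1 := hfin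
      _ = c' * D := mul_one _
  -- pass to the limit c' → S.toReal
  have hreal : |f a - f b| ≤ S.toReal * dist a b := by
    by_contra hcon
    push_neg at hcon
    have hq : S.toReal < |f a - f b| / dist a b := (lt_div_iff₀ hd).2 (by linarith)
    set c' := (S.toReal + |f a - f b| / dist a b) / 2 with hc'
    have h1 : S.toReal < c' := by rw [hc']; linarith
    have h2 : c' < |f a - f b| / dist a b := by rw [hc']; linarith
    have h3 := key c' h1
    have h4 := (lt_div_iff₀ hd).1 h2
    linarith
  calc ENNReal.ofReal |f a - f b| ≤ ENNReal.ofReal (S.toReal * dist a b) :=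
      ENNReal.ofReal_le_ofReal hreal
    _ = ENNReal.ofReal S.toReal * ENNReal.ofReal (dist a b) :=
      ENNReal.ofReal_mul ENNReal.toReal_nonneg
    _ = S * ENNReal.ofReal (dist a b) := by rw [ENNReal.ofReal_toReal hSfin]

end KuwadaProof
end KuwadaAux3
section KuwadaAux4
open Kuwada Topology
set_option linter.unusedSectionVars false
set_option maxHeartbeats 1000000

namespace KuwadaProof

variable {X : Type*} [MetricSpace X] [MeasurableSpace X] [BorelSpace X]

lemma heatOp_diff_le [TopologicalSpace.SeparableSpace X] {dt : X → X → ℝ} (hdt : IsContDist dt)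
    {P : X → Measure X} (hprob : ∀ x, IsProbabilityMeasure (P x)) {p : ℝ≥0∞} (hp0 : p ≠ 0)
    (hC : CondC P dt p) {f : X → ℝ} {C : ℝ} {K : ℝ≥0} (hfb : ∀ z, |f z| ≤ C)
    (hK : LipschitzWith K f) (ε : ℝ) (x y : X) {c : ℝ≥0∞} (hc : ENNReal.ofReal (dt x y) < c) :
    ∃ π : Measure (X × X), π.map Prod.fst = P x ∧
      eLpNorm (fun z : X × X => dist z.1 z.2) p π ≤ c ∧
      ENNReal.ofReal |heatOp P f x - heatOp P f y| ≤
        (∫⁻ z, gE f ε z.1 * ENNReal.ofReal (dist z.1 z.2) ∂π) +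
        ∫⁻ z in {w : X × X | ε ≤ dist w.1 w.2}, (K : ℝ≥0∞) * ENNReal.ofReal (dist z.1 z.2) ∂π := by
  haveI := UniformSpace.secondCountable_of_separable X
  have hfc : Continuous f := hK.continuous
  have hgE : Measurable (gE f ε) := measurable_gE hfc ε
  obtain ⟨π, h1, h2, hlt⟩ := exists_coupling_lt hdt hp0 hC x y hc
  refine ⟨π, h1, hlt.le, ?_⟩
  refine le_trans (ofReal_abs_heatOp_sub_le hfc hfb (hprob x) h1 h2) ?_
  have hdE : Measurable fun z : X × X => ENNReal.ofReal (dist z.1 z.2) :=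
    ENNReal.measurable_ofReal.comp (continuous_fst.dist continuous_snd).measurable
  have hSmeas : MeasurableSet {w : X × X | ε ≤ dist w.1 w.2} :=
    measurableSet_le measurable_const (continuous_fst.dist continuous_snd).measurable
  have hpt : ∀ z : X × X, ENNReal.ofReal |f z.1 - f z.2| ≤
      gE f ε z.1 * ENNReal.ofReal (dist z.1 z.2) +
      Set.indicator {w : X × X | ε ≤ dist w.1 w.2}
        (fun w => (K : ℝ≥0∞) * ENNReal.ofReal (dist w.1 w.2)) z := by
    intro z
    by_cases hz : ε ≤ dist z.1 z.2
    · rw [Set.indicator_of_mem (show z ∈ {w : X × X | ε ≤ dist w.1 w.2} from hz)]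
      exact le_trans (ofReal_abs_sub_le_lip hK _ _) le_add_self
    · rw [Set.indicator_of_notMem (show z ∉ {w : X × X | ε ≤ dist w.1 w.2} from hz), add_zero]
      exact abs_le_gE_mul (not_le.1 hz)
  calc ∫⁻ z, ENNReal.ofReal |f z.1 - f z.2| ∂π
      ≤ ∫⁻ z, (gE f ε z.1 * ENNReal.ofReal (dist z.1 z.2) +
          Set.indicator {w : X × X | ε ≤ dist w.1 w.2}
            (fun w => (K : ℝ≥0∞) * ENNReal.ofReal (dist w.1 w.2)) z) ∂π :=
        lintegral_mono hpt
    _ = (∫⁻ z, gE f ε z.1 * ENNReal.ofReal (dist z.1 z.2) ∂π) +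
        ∫⁻ z, Set.indicator {w : X × X | ε ≤ dist w.1 w.2}
          (fun w => (K : ℝ≥0∞) * ENNReal.ofReal (dist w.1 w.2)) z ∂π :=
        lintegral_add_left ((hgE.comp measurable_fst).mul hdE) _
    _ = (∫⁻ z, gE f ε z.1 * ENNReal.ofReal (dist z.1 z.2) ∂π) +
        ∫⁻ z in {w : X × X | ε ≤ dist w.1 w.2}, (K : ℝ≥0∞) * ENNReal.ofReal (dist z.1 z.2) ∂π := by
        rw [lintegral_indicator hSmeas]

end KuwadaProof
end KuwadaAux4
section KuwadaAux5
open Kuwada Topology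
set_option linter.unusedSectionVars false
set_option maxHeartbeats 1000000

namespace KuwadaProof

variable {X : Type*} [MetricSpace X] [MeasurableSpace X] [BorelSpace X]

lemma gradNorm_le_A [TopologicalSpace.SeparableSpace X] {dt : X → X → ℝ} (hdt : IsContDist dt)
    {P : X → Measure X} (hprob : ∀ x, IsProbabilityMeasure (P x)) {p q : ℝ≥0∞} (hp : 1 ≤ p)
    (hpq : 1 / p + 1 / q = 1) (hq : q ≠ ∞) (hC : CondC P dt p)
    {f : X → ℝ} {C : ℝ} {K : ℝ≥0} (hfb : ∀ z, |f z| ≤ C) (hK : LipschitzWith K f)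
    (x : X) {ε : ℝ} (hε : 0 < ε) :
    gradNorm dt (heatOp P f) x ≤ (∫⁻ y, gE f ε y ^ q.toReal ∂ P x) ^ (1 / q.toReal) := by
  haveI := UniformSpace.secondCountable_of_separable X
  haveI : IsProbabilityMeasure (P x) := hprob x
  have hfc : Continuous f := hK.continuous
  have hgE : Measurable (gE f ε) := measurable_gE hfc ε
  have hdE : Measurable fun z : X × X => ENNReal.ofReal (dist z.1 z.2) :=
    ENNReal.measurable_ofReal.comp (continuous_fst.dist continuous_snd).measurable
  have hp0 : p ≠ 0 := (lt_of_lt_of_le zero_lt_one hp).ne'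
  have hq1 : 1 ≤ q := by
    have h1 : 1 / q ≤ 1 := le_trans le_add_self hpq.le
    rwa [one_div, ENNReal.inv_le_one] at h1
  have hq0 : q ≠ 0 := (lt_of_lt_of_le zero_lt_one hq1).ne'
  set q' := q.toReal with hq'def
  have hq'1 : 1 ≤ q' := by
    rw [hq'def, ← ENNReal.toReal_one]
    exact ENNReal.toReal_mono hq hq1
  have hq'0 : (0:ℝ) < q' := lt_of_lt_of_le zero_lt_one hq'1
  set A := (∫⁻ y, gE f ε y ^ q' ∂ P x) ^ (1 / q') with hAdef
  have hAleK : A ≤ (K : ℝ≥0∞) := by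
    have h1 : ∫⁻ y, gE f ε y ^ q' ∂ P x ≤ (K : ℝ≥0∞) ^ q' := by
      calc ∫⁻ y, gE f ε y ^ q' ∂ P x ≤ ∫⁻ _, (K : ℝ≥0∞) ^ q' ∂ P x :=
          lintegral_mono fun y => ENNReal.rpow_le_rpow (gE_le_coe hK ε y) hq'0.le
        _ = (K : ℝ≥0∞) ^ q' := by rw [lintegral_const, measure_univ, mul_one]
    calc A ≤ ((K:ℝ≥0∞) ^ q') ^ (1/q') := ENNReal.rpow_le_rpow h1 (by positivity)
      _ = (K : ℝ≥0∞) := by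
          rw [← ENNReal.rpow_mul, mul_one_div_cancel hq'0.ne', ENNReal.rpow_one]
  have hAtop : A ≠ ∞ := (lt_of_le_of_lt hAleK ENNReal.coe_lt_top).ne
  have hmarg : ∀ (π : Measure (X × X)), π.map Prod.fst = P x → ∀ s : ℝ,
      ∫⁻ z : X × X, gE f ε z.1 ^ s ∂π = ∫⁻ w, gE f ε w ^ s ∂ P x := by
    intro π h1 s
    rw [← h1, lintegral_map (hgE.pow_const s) measurable_fst]
  rcases eq_or_ne p ∞ with hptop | hptop
  · -- case p = ∞ (q = 1)
    have hq_eq : q = 1 := by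
      rw [hptop] at hpq
      simp only [one_div, ENNReal.inv_top, zero_add] at hpq
      rwa [ENNReal.inv_eq_one] at hpq
    have hq'eq : q' = 1 := by rw [hq'def, hq_eq, ENNReal.toReal_one]
    set A0 := ∫⁻ w, gE f ε w ∂ P x with hA0def
    have hAeq : A = A0 := by
      rw [hAdef, hq'eq]
      simp [ENNReal.rpow_one, hA0def]
    rw [hAeq] at hAleK hAtop ⊢
    refine ENNReal.le_of_forall_pos_le_add fun η hη _ => ?_
    set θ : ℝ := (η : ℝ) / (K + 1) with hθdef
    have hθ0 : 0 < θ := by positivity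
    set r : ℝ := ε / (2 * (1 + θ)) with hrdef
    have hr : 0 < r := by positivity
    have hsup : ∀ y : X, 0 < dt x y → dt x y ≤ r →
        ENNReal.ofReal (|heatOp P f x - heatOp P f y| / dt x y) ≤
          ENNReal.ofReal (1 + θ) * A0 := by
      intro y ht htr
      set t := dt x y with htdef
      set c := ENNReal.ofReal (t * (1 + θ)) with hcdef
      have hc : ENNReal.ofReal (dt x y) < c := by
        rw [hcdef]
        refine (ENNReal.ofReal_lt_ofReal_iff (by positivity)).2 ?_
        nlinarith
      obtain ⟨π, h1, hle, hbound⟩ := heatOp_diff_le hdt hprob hp0 hC hfb hK ε x y hc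
      have hd_ae : ∀ᵐ z ∂π, ENNReal.ofReal (dist z.1 z.2) ≤ c := by
        rw [hptop, eLpNorm_exponent_top, eLpNormEssSup] at hle
        filter_upwards [ae_le_essSup (μ := π) fun z : X × X => (‖dist z.1 z.2‖₊ : ℝ≥0∞)] with z hz
        calc ENNReal.ofReal (dist z.1 z.2) = (‖dist z.1 z.2‖₊ : ℝ≥0∞) :=
            (Real.enorm_eq_ofReal dist_nonneg).symm
          _ ≤ essSup (fun z : X × X => (‖dist z.1 z.2‖₊ : ℝ≥0∞)) π := hz
          _ ≤ c := hle
      have hclt : c < ENNReal.ofReal ε := by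
        rw [hcdef]
        refine (ENNReal.ofReal_lt_ofReal_iff hε).2 ?_
        have h2 : t * (1 + θ) ≤ r * (1 + θ) := by nlinarith
        have h3 : r * (1 + θ) = ε / 2 := by rw [hrdef]; field_simp
        linarith
      have hnull : π {w : X × X | ε ≤ dist w.1 w.2} = 0 := by
        refine measure_mono_null (fun z hz => ?_) (ae_iff.1 hd_ae)
        simp only [mem_setOf_eq, not_le]
        exact lt_of_lt_of_le hclt (ENNReal.ofReal_le_ofReal hz)
      have hT2 : ∫⁻ z in {w : X × X | ε ≤ dist w.1 w.2},
          (K : ℝ≥0∞) * ENNReal.ofReal (dist z.1 z.2) ∂π = 0 := by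
        rw [Measure.restrict_eq_zero.2 hnull, lintegral_zero_measure]
      have hT1 : ∫⁻ z : X × X, gE f ε z.1 * ENNReal.ofReal (dist z.1 z.2) ∂π ≤ A0 * c := by
        calc ∫⁻ z : X × X, gE f ε z.1 * ENNReal.ofReal (dist z.1 z.2) ∂π
            ≤ ∫⁻ z : X × X, gE f ε z.1 * c ∂π :=
              lintegral_mono_ae (hd_ae.mono fun z hz => mul_le_mul_right hz _)
          _ = (∫⁻ z : X × X, gE f ε z.1 ∂π) * c :=
              lintegral_mul_const c (hgE.comp measurable_fst)
          _ = A0 * c := by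
              have := hmarg π h1 1
              simp only [ENNReal.rpow_one] at this
              rw [this]
      rw [ENNReal.ofReal_div_of_pos ht]
      rw [ENNReal.div_le_iff_le_mul (Or.inl (ENNReal.ofReal_pos.2 ht).ne') (Or.inl ENNReal.ofReal_ne_top)]
      calc ENNReal.ofReal |heatOp P f x - heatOp P f y| ≤ _ + _ := hbound
        _ ≤ A0 * c + 0 := by rw [hT2]; exact add_le_add_left hT1 0
        _ = A0 * c := add_zero _
        _ = ENNReal.ofReal (1 + θ) * A0 * ENNReal.ofReal t := by
            rw [hcdef, ENNReal.ofReal_mul ht.le]; ring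
    have hgrad : gradNorm dt (heatOp P f) x ≤ ENNReal.ofReal (1 + θ) * A0 := by
      refine le_trans (iInf₂_le r hr) (iSup₂_le fun y hy => hsup y hy.1 hy.2)
    refine le_trans hgrad ?_
    have hsplit : ENNReal.ofReal (1 + θ) = 1 + ENNReal.ofReal θ := by
      rw [ENNReal.ofReal_add zero_le_one hθ0.le, ENNReal.ofReal_one]
    rw [hsplit, add_mul, one_mul]
    refine add_le_add_right ?_ A0
    calc ENNReal.ofReal θ * A0 ≤ ENNReal.ofReal θ * (K : ℝ≥0∞) := mul_le_mul_right hAleK _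
      _ = ENNReal.ofReal (θ * K) := by
          rw [ENNReal.ofReal_mul hθ0.le, ENNReal.ofReal_coe_nnreal]
      _ ≤ (η : ℝ≥0∞) := by
          rw [← ENNReal.ofReal_coe_nnreal (p := η)]
          refine ENNReal.ofReal_le_ofReal ?_
          rw [hθdef]
          rw [div_mul_eq_mul_div, div_le_iff₀ (by positivity)]
          have hK0 : (0:ℝ) ≤ (K:ℝ) := K.coe_nonneg
          nlinarith [(η : ℝ≥0).coe_nonneg]
  · -- case p ≠ ∞ (1 < p < ∞, 1 < q < ∞)
    have hpne1 : p ≠ 1 := by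
      rintro rfl
      simp only [ne_eq, one_div, inv_one] at hpq
      have h0 : q⁻¹ = 0 := by
        have h1 : (1:ℝ≥0∞) + q⁻¹ = 1 + 0 := by rw [add_zero]; exact hpq
        exact (ENNReal.add_right_inj ENNReal.one_ne_top).1 h1
      exact hq (ENNReal.inv_eq_zero.1 h0)
    set p' := p.toReal with hp'def
    have hp'1 : 1 < p' := by
      have h1 : (1:ℝ≥0∞) < p := lt_of_le_of_ne hp (Ne.symm hpne1)
      rw [hp'def, ← ENNReal.toReal_one]
      exact (ENNReal.toReal_lt_toReal ENNReal.one_ne_top hptop).2 h1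
    have hp'0 : (0:ℝ) < p' := lt_trans one_pos hp'1
    have hsum : 1 / p' + 1 / q' = 1 := by
      have h := congrArg ENNReal.toReal hpq
      rwa [ENNReal.toReal_add (by simp [hp0]) (by simp [hq0]), ENNReal.toReal_div,
        ENNReal.toReal_div, ENNReal.toReal_one] at h
    have hconj : Real.HolderConjugate p' q' := Real.holderConjugate_iff.mpr ⟨hp'1, by
      rw [← one_div, ← one_div]; exact hsum⟩
    set s := p' * (1 / q') with hsdef
    have hs : 0 < s := by positivity
    set εE := ENNReal.ofReal ε with hεEdef
    have hεEtop : εE ≠ ∞ := ENNReal.ofReal_ne_top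
    refine ENNReal.le_of_forall_pos_le_add fun η hη _ => ?_
    have hηR : (0:ℝ) < η := hη
    set θ : ℝ := min 1 ((η : ℝ) / (2 * (K + 1))) with hθdef
    have hθ0 : 0 < θ := lt_min one_pos (by positivity)
    have hθ1 : θ ≤ 1 := min_le_left _ _
    set u : ℝ := ((η : ℝ) / (4 * (K + 1))) ^ (s⁻¹) with hudef
    have hu0 : 0 < u := Real.rpow_pos_of_pos (by positivity) _
    set r : ℝ := (ε / 2) * u with hrdef
    have hr : 0 < r := by positivity
    set E : ℝ≥0∞ := (K : ℝ≥0∞) * ((ENNReal.ofReal (r * (1 + θ)) / εE) ^ s) with hEdef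
    have hsup : ∀ y : X, 0 < dt x y → dt x y ≤ r →
        ENNReal.ofReal (|heatOp P f x - heatOp P f y| / dt x y) ≤
          ENNReal.ofReal (1 + θ) * (A + E) := by
      intro y ht htr
      set t := dt x y with htdef
      set c := ENNReal.ofReal (t * (1 + θ)) with hcdef
      have hc : ENNReal.ofReal (dt x y) < c := by
        rw [hcdef]
        exact (ENNReal.ofReal_lt_ofReal_iff (by positivity)).2 (by nlinarith)
      obtain ⟨π, h1, hle, hbound⟩ := heatOp_diff_le hdt hprob hp0 hC hfb hK ε x y hc
      set J := ∫⁻ z : X × X, (ENNReal.ofReal (dist z.1 z.2)) ^ p' ∂π with hJdef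
      have hJle : J ^ (1 / p') ≤ c := by
        rw [eLpNorm_eq_lintegral_rpow_enorm_toReal hp0 hptop] at hle
        simp only [← hp'def] at hle
        rwa [show ∫⁻ z : X × X, ‖dist z.1 z.2‖ₑ ^ p' ∂π = J from
          lintegral_congr fun z => by rw [Real.enorm_eq_ofReal dist_nonneg]] at hle
      have hJc : J ≤ c ^ p' := by
        have h2 := ENNReal.rpow_le_rpow hJle hp'0.le
        rwa [← ENNReal.rpow_mul, one_div, inv_mul_cancel₀ hp'0.ne', ENNReal.rpow_one] at h2
      have hT1 : ∫⁻ z : X × X, gE f ε z.1 * ENNReal.ofReal (dist z.1 z.2) ∂π ≤ A * c := by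
        have hH := ENNReal.lintegral_mul_le_Lp_mul_Lq π hconj.symm
          ((hgE.comp measurable_fst).aemeasurable) hdE.aemeasurable
        simp only [Pi.mul_apply] at hH
        calc ∫⁻ z : X × X, gE f ε z.1 * ENNReal.ofReal (dist z.1 z.2) ∂π
            ≤ (∫⁻ z : X × X, gE f ε z.1 ^ q' ∂π) ^ (1 / q') *
              (∫⁻ z : X × X, (ENNReal.ofReal (dist z.1 z.2)) ^ p' ∂π) ^ (1 / p') := hH
          _ = A * J ^ (1 / p') := by rw [hmarg π h1 q', ← hAdef, ← hJdef]
          _ ≤ A * c := mul_le_mul_right hJle _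
      have hεE0' : εE ^ p' ≠ 0 := (ENNReal.rpow_pos (ENNReal.ofReal_pos.2 hε) hεEtop).ne'
      have hcheb : π {w : X × X | ε ≤ dist w.1 w.2} ≤ J / εE ^ p' := by
        have hsub : {w : X × X | ε ≤ dist w.1 w.2} ⊆
            {z : X × X | εE ^ p' ≤ (ENNReal.ofReal (dist z.1 z.2)) ^ p'} :=
          fun z hz => ENNReal.rpow_le_rpow (ENNReal.ofReal_le_ofReal hz) hp'0.le
        have hmm := mul_meas_ge_le_lintegral₀ (μ := π) ((hdE.pow_const p').aemeasurable) (εE ^ p')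
        have h3 : εE ^ p' * π {w : X × X | ε ≤ dist w.1 w.2} ≤ J :=
          le_trans (mul_le_mul_right (measure_mono hsub) _) hmm
        rw [ENNReal.le_div_iff_mul_le (Or.inl hεE0')
          (Or.inl (ENNReal.rpow_ne_top_of_nonneg hp'0.le hεEtop))]
        rwa [mul_comm]
      have hT2 : ∫⁻ z in {w : X × X | ε ≤ dist w.1 w.2},
          (K : ℝ≥0∞) * ENNReal.ofReal (dist z.1 z.2) ∂π ≤ K * (c * (c / εE) ^ s) := by
        rw [lintegral_const_mul _ hdE]
        refine mul_le_mul_right ?_ _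
        have hH2 := ENNReal.lintegral_mul_le_Lp_mul_Lq
          (π.restrict {w : X × X | ε ≤ dist w.1 w.2}) hconj
          hdE.aemeasurable (aemeasurable_const (b := (1 : ℝ≥0∞)))
        simp only [Pi.mul_apply, mul_one, ENNReal.one_rpow, lintegral_one,
          Measure.restrict_apply_univ] at hH2
        calc ∫⁻ z in {w : X × X | ε ≤ dist w.1 w.2}, ENNReal.ofReal (dist z.1 z.2) ∂π
            ≤ (∫⁻ z in {w : X × X | ε ≤ dist w.1 w.2},
                (ENNReal.ofReal (dist z.1 z.2)) ^ p' ∂π) ^ (1 / p') *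
              (π {w : X × X | ε ≤ dist w.1 w.2}) ^ (1 / q') := hH2
          _ ≤ J ^ (1 / p') * (J / εE ^ p') ^ (1 / q') := by
              refine mul_le_mul' (ENNReal.rpow_le_rpow ?_ (by positivity))
                (ENNReal.rpow_le_rpow hcheb (by positivity))
              exact lintegral_mono' Measure.restrict_le_self le_rfl
          _ ≤ c * ((c ^ p' / εE ^ p')) ^ (1 / q') := by
              refine mul_le_mul' hJle (ENNReal.rpow_le_rpow ?_ (by positivity))
              exact ENNReal.div_le_div_right hJc _
          _ = c * (c / εE) ^ s := by
              rw [← ENNReal.div_rpow_of_nonneg _ _ hp'0.le, ← ENNReal.rpow_mul, hsdef]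
      rw [ENNReal.ofReal_div_of_pos ht,
        ENNReal.div_le_iff_le_mul (Or.inl (ENNReal.ofReal_pos.2 ht).ne')
          (Or.inl ENNReal.ofReal_ne_top)]
      have hcr : c ≤ ENNReal.ofReal (r * (1 + θ)) := by
        rw [hcdef]
        exact ENNReal.ofReal_le_ofReal (by nlinarith)
      calc ENNReal.ofReal |heatOp P f x - heatOp P f y| ≤ _ + _ := hbound
        _ ≤ A * c + K * (c * (c / εE) ^ s) := add_le_add hT1 hT2
        _ ≤ A * c + K * (c * ((ENNReal.ofReal (r * (1 + θ)) / εE) ^ s)) := by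
            refine add_le_add_right (mul_le_mul_right (mul_le_mul_right ?_ c) _) _
            exact ENNReal.rpow_le_rpow (ENNReal.div_le_div_right hcr _) hs.le
        _ = ENNReal.ofReal (1 + θ) * (A + E) * ENNReal.ofReal t := by
            rw [hEdef, hcdef, ENNReal.ofReal_mul ht.le]; ring
    have hgrad : gradNorm dt (heatOp P f) x ≤ ENNReal.ofReal (1 + θ) * (A + E) :=
      le_trans (iInf₂_le r hr) (iSup₂_le fun y hy => hsup y hy.1 hy.2)
    refine le_trans hgrad ?_
    have hK0 : (0:ℝ) ≤ (K : ℝ) := K.coe_nonneg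
    have hE : E ≤ ENNReal.ofReal ((η : ℝ) / 4) := by
      have h2r : r * (1 + θ) ≤ 2 * r := by nlinarith
      calc E ≤ (K : ℝ≥0∞) * ((ENNReal.ofReal (2 * r) / εE) ^ s) := by
            rw [hEdef]
            exact mul_le_mul_right (ENNReal.rpow_le_rpow
              (ENNReal.div_le_div_right (ENNReal.ofReal_le_ofReal h2r) _) hs.le) _
        _ = (K : ℝ≥0∞) * ENNReal.ofReal ((2 * r / ε) ^ s) := by
            rw [hεEdef, ← ENNReal.ofReal_div_of_pos hε,
              ENNReal.ofReal_rpow_of_nonneg (by positivity) hs.le]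
        _ = (K : ℝ≥0∞) * ENNReal.ofReal ((η : ℝ) / (4 * (K + 1))) := by
            have h6 : 2 * r / ε = u := by rw [hrdef]; field_simp
            rw [h6, hudef, Real.rpow_inv_rpow (by positivity) hs.ne']
        _ = ENNReal.ofReal ((K : ℝ) * ((η : ℝ) / (4 * (K + 1)))) := by
            rw [ENNReal.ofReal_mul hK0, ENNReal.ofReal_coe_nnreal]
        _ ≤ ENNReal.ofReal ((η : ℝ) / 4) := by
            refine ENNReal.ofReal_le_ofReal ?_
            rw [mul_div_assoc']
            rw [div_le_div_iff₀ (by positivity) (by positivity)]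
            nlinarith
    have hθA : ENNReal.ofReal θ * A ≤ ENNReal.ofReal ((η : ℝ) / 2) := by
      calc ENNReal.ofReal θ * A ≤ ENNReal.ofReal θ * (K : ℝ≥0∞) := mul_le_mul_right hAleK _
        _ = ENNReal.ofReal (θ * K) := by
            rw [ENNReal.ofReal_mul hθ0.le, ENNReal.ofReal_coe_nnreal]
        _ ≤ ENNReal.ofReal ((η : ℝ) / 2) := by
            refine ENNReal.ofReal_le_ofReal ?_
            have h4 : θ ≤ (η : ℝ) / (2 * (K + 1)) := min_le_right _ _
            have h5 : (η : ℝ) / (2 * (K + 1)) * K ≤ (η : ℝ) / 2 := by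
              rw [div_mul_eq_mul_div, div_le_div_iff₀ (by positivity) (by positivity)]
              nlinarith
            nlinarith [mul_le_mul_of_nonneg_right h4 hK0]
    have hθE : ENNReal.ofReal θ * E ≤ ENNReal.ofReal ((η : ℝ) / 4) := by
      calc ENNReal.ofReal θ * E ≤ 1 * E :=
          mul_le_mul_left (ENNReal.ofReal_le_one.2 hθ1) _
        _ = E := one_mul _
        _ ≤ ENNReal.ofReal ((η : ℝ) / 4) := hE
    have hsplit : ENNReal.ofReal (1 + θ) = 1 + ENNReal.ofReal θ := by
      rw [ENNReal.ofReal_add zero_le_one hθ0.le, ENNReal.ofReal_one]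
    calc ENNReal.ofReal (1 + θ) * (A + E)
        = A + (E + (ENNReal.ofReal θ * A + ENNReal.ofReal θ * E)) := by rw [hsplit]; ring
      _ ≤ A + (ENNReal.ofReal ((η : ℝ) / 4) + (ENNReal.ofReal ((η : ℝ) / 2) +
            ENNReal.ofReal ((η : ℝ) / 4))) :=
          add_le_add_right (add_le_add hE (add_le_add hθA hθE)) A
      _ = A + ENNReal.ofReal (η : ℝ) := by
          rw [← ENNReal.ofReal_add (by positivity) (by positivity),
            ← ENNReal.ofReal_add (by positivity) (by positivity)]
          congr 1
          ring
      _ = A + (η : ℝ≥0∞) := by rw [ENNReal.ofReal_coe_nnreal]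

end KuwadaProof
end KuwadaAux5

open Kuwada in
/-- Proposition 3.1: `(C_p)` implies `(G_q)` (with `(G_∞)` when `p = 1`), with no
regularity assumption beyond weak continuity of `x ↦ P_x`. -/
theorem gradient_estimate_of_wasserstein_control
    {X : Type*} [MetricSpace X] [CompleteSpace X] [TopologicalSpace.SeparableSpace X]
    [ProperSpace X] [MeasurableSpace X] [BorelSpace X]
    (hgeo : GeodesicFor (dist : X → X → ℝ))
    (dt : X → X → ℝ) (hdt : IsContDist dt) (hdtgeo : GeodesicFor dt)
    (P : X → Measure X) (hprob : ∀ x, IsProbabilityMeasure (P x))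
    (hweak : WeaklyContinuous P)
    (p q : ℝ≥0∞) (hp : 1 ≤ p) (hpq : 1 / p + 1 / q = 1)
    (hC : CondC P dt p) :
    (q ≠ ∞ → CondG P dt q.toReal) ∧ (q = ∞ → CondGInf P dt) := by
  haveI := UniformSpace.secondCountable_of_separable X
  constructor
  · -- finite q : condition (G_q)
    intro hq f hf x
    obtain ⟨⟨C, hC_bd⟩, ⟨K, hK⟩⟩ := hf
    haveI := hprob x
    have hfc : Continuous f := hK.continuous
    have hq1 : 1 ≤ q := by
      have h1 : 1 / q ≤ 1 := le_trans le_add_self hpq.le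
      rwa [one_div, ENNReal.inv_le_one] at h1
    have hq'1 : 1 ≤ q.toReal := by
      rw [← ENNReal.toReal_one]
      exact ENNReal.toReal_mono hq hq1
    have hq'0 : (0:ℝ) < q.toReal := lt_of_lt_of_le zero_lt_one hq'1
    have hmeas : ∀ n : ℕ, Measurable fun y => KuwadaProof.gE f (1 / (n + 1)) y := fun n =>
      KuwadaProof.measurable_gE hfc _
    have hstep : ∀ n : ℕ, gradNorm dt (heatOp P f) x ≤
        (∫⁻ y, KuwadaProof.gE f (1 / (n + 1)) y ^ q.toReal ∂ P x) ^ (1 / q.toReal) := fun n =>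
      KuwadaProof.gradNorm_le_A hdt hprob hp hpq hq hC hC_bd hK x (by positivity)
    refine le_trans (le_iInf hstep) (le_of_eq ?_)
    rw [← KuwadaProof.iInf_rpow_const
      (fun n : ℕ => ∫⁻ y, KuwadaProof.gE f (1 / (n + 1)) y ^ q.toReal ∂ P x) (by positivity)]
    congr 1
    have h2 : ∀ n : ℕ, Measurable fun y => KuwadaProof.gE f (1 / (n + 1)) y ^ q.toReal :=
      fun n => (hmeas n).pow_const _
    have hanti : Antitone fun n : ℕ => fun y => KuwadaProof.gE f (1 / (n + 1)) y ^ q.toReal := by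
      intro n m hnm
      intro y
      refine ENNReal.rpow_le_rpow (KuwadaProof.gE_antitone ?_ y) hq'0.le
      have hcast : (n:ℝ) + 1 ≤ (m:ℝ) + 1 := by
        have : (n:ℝ) ≤ (m:ℝ) := Nat.cast_le.2 hnm
        linarith
      exact one_div_le_one_div_of_le (by positivity) hcast
    have hfin : ∫⁻ y, KuwadaProof.gE f (1 / ((0:ℕ) + 1)) y ^ q.toReal ∂ P x ≠ ∞ := by
      have hb : ∫⁻ y, KuwadaProof.gE f (1 / ((0:ℕ) + 1)) y ^ q.toReal ∂ P x
          ≤ (K : ℝ≥0∞) ^ q.toReal := by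
        calc ∫⁻ y, KuwadaProof.gE f (1 / ((0:ℕ) + 1)) y ^ q.toReal ∂ P x
            ≤ ∫⁻ _, (K : ℝ≥0∞) ^ q.toReal ∂ P x := lintegral_mono fun y =>
              ENNReal.rpow_le_rpow (KuwadaProof.gE_le_coe hK _ y) hq'0.le
          _ = (K : ℝ≥0∞) ^ q.toReal := by rw [lintegral_const, measure_univ, mul_one]
      exact ne_top_of_le_ne_top (ENNReal.rpow_ne_top_of_nonneg hq'0.le ENNReal.coe_ne_top) hb
    rw [← lintegral_iInf h2 hanti hfin]
    refine lintegral_congr fun y => ?_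
    rw [KuwadaProof.gradNorm_dist_eq f y, KuwadaProof.iInf_rpow_const _ hq'0]
  · -- q = ∞ : condition (G_∞), in which case p = 1
    intro hqtop
    have hp1 : p = 1 := by
      rw [hqtop] at hpq
      simp only [one_div, ENNReal.inv_top, add_zero] at hpq
      rwa [ENNReal.inv_eq_one] at hpq
    intro f hf
    obtain ⟨⟨C, hC_bd⟩, ⟨K, hK⟩⟩ := hf
    set S := ⨆ z, gradNorm dist f z with hSdef
    rcases eq_or_ne S ∞ with hS | hS
    · rw [hS]; exact le_top
    refine iSup_le fun x => ?_
    haveI := hprob x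
    have hdE : Measurable fun z : X × X => ENNReal.ofReal (dist z.1 z.2) :=
      ENNReal.measurable_ofReal.comp (continuous_fst.dist continuous_snd).measurable
    refine le_trans (iInf₂_le (1:ℝ) one_pos) (iSup₂_le fun y hy => ?_)
    refine ENNReal.le_of_forall_pos_le_add fun η hη _ => ?_
    have ht : 0 < dt x y := hy.1
    set θ : ℝ := (η : ℝ) / (S.toReal + 1) with hθdef
    have hθ0 : 0 < θ := by positivity
    set c := ENNReal.ofReal (dt x y * (1 + θ)) with hcdef
    have hc : ENNReal.ofReal (dt x y) < c := by
      rw [hcdef]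
      exact (ENNReal.ofReal_lt_ofReal_iff (by positivity)).2 (by nlinarith)
    have hp0 : p ≠ 0 := by rw [hp1]; exact one_ne_zero
    obtain ⟨π, h1, h2, hlt⟩ := KuwadaProof.exists_coupling_lt hdt hp0 hC x y hc
    have hbound := KuwadaProof.ofReal_abs_heatOp_sub_le hK.continuous hC_bd (hprob x) h1 h2
    have hdc : ∫⁻ z : X × X, ENNReal.ofReal (dist z.1 z.2) ∂π ≤ c := by
      have h3 := hlt.le
      rw [hp1, eLpNorm_one_eq_lintegral_enorm] at h3
      rwa [show ∫⁻ z : X × X, ‖dist z.1 z.2‖ₑ ∂π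
          = ∫⁻ z : X × X, ENNReal.ofReal (dist z.1 z.2) ∂π from
        lintegral_congr fun z => Real.enorm_eq_ofReal dist_nonneg] at h3
    have hS2 : ∫⁻ z : X × X, ENNReal.ofReal |f z.1 - f z.2| ∂π ≤ S * c := by
      calc ∫⁻ z : X × X, ENNReal.ofReal |f z.1 - f z.2| ∂π
          ≤ ∫⁻ z : X × X, S * ENNReal.ofReal (dist z.1 z.2) ∂π :=
            lintegral_mono fun z => KuwadaProof.abs_sub_le_iSup_gradNorm hgeo f _ _
        _ = S * ∫⁻ z : X × X, ENNReal.ofReal (dist z.1 z.2) ∂π := lintegral_const_mul S hdE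
        _ ≤ S * c := mul_le_mul_right hdc S
    rw [ENNReal.ofReal_div_of_pos ht,
      ENNReal.div_le_iff_le_mul (Or.inl (ENNReal.ofReal_pos.2 ht).ne')
        (Or.inl ENNReal.ofReal_ne_top)]
    have hSθ : S * ENNReal.ofReal θ ≤ (η : ℝ≥0∞) := by
      calc S * ENNReal.ofReal θ = ENNReal.ofReal S.toReal * ENNReal.ofReal θ := by
            rw [ENNReal.ofReal_toReal hS]
        _ = ENNReal.ofReal (S.toReal * θ) := (ENNReal.ofReal_mul ENNReal.toReal_nonneg).symm
        _ ≤ ENNReal.ofReal (η : ℝ) := by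
            refine ENNReal.ofReal_le_ofReal ?_
            rw [hθdef, mul_div_assoc', div_le_iff₀ (by positivity)]
            have hS0 : (0:ℝ) ≤ S.toReal := ENNReal.toReal_nonneg
            nlinarith [(η : ℝ≥0).coe_nonneg]
        _ = (η : ℝ≥0∞) := ENNReal.ofReal_coe_nnreal
    calc ENNReal.ofReal |heatOp P f x - heatOp P f y| ≤ S * c := le_trans hbound hS2
      _ = (S + S * ENNReal.ofReal θ) * ENNReal.ofReal (dt x y) := by
          rw [hcdef, ENNReal.ofReal_mul ht.le, ENNReal.ofReal_add zero_le_one hθ0.le,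
            ENNReal.ofReal_one]
          ring
      _ ≤ (S + ↑η) * ENNReal.ofReal (dt x y) := mul_le_mul_left (add_le_add_right hSθ S) _
end
end

section
/- Let ρ: X×X → [0,∞) be a continuous function. Then for any Borel probability measures μ, ν on X, lim_{p→∞} ρ^W_p(μ,ν) = ρ^W_∞(μ,ν) (as an identity in [0,∞]). -/
open MeasureTheory ENNReal NNReal Metric Set Filter

noncomputable section

open Kuwada


set_option maxHeartbeats 1000000

section WTopAux

open TopologicalSpace

variable {X : Type*} [MetricSpace X] [MeasurableSpace X] [BorelSpace X]

private lemma isProbabilityMeasure_of_map_fst {μ : Measure X} [IsProbabilityMeasure μ]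
    {π : Measure (X × X)} (h : π.map Prod.fst = μ) : IsProbabilityMeasure π := by
  refine ⟨?_⟩
  have h1 : π.map Prod.fst Set.univ = μ Set.univ := by rw [h]
  rw [Measure.map_apply measurable_fst MeasurableSet.univ, Set.preimage_univ] at h1
  rw [h1, measure_univ]

private lemma exists_coupling_limit
    [CompleteSpace X] [SeparableSpace X] [ProperSpace X]
    (μ ν : Measure X) [IsProbabilityMeasure μ] [IsProbabilityMeasure ν]
    {S : Set (X × X)} (hS : IsClosed S) (πs : ℕ → Measure (X × X))
    (hfst : ∀ n, (πs n).map Prod.fst = μ) (hsnd : ∀ n, (πs n).map Prod.snd = ν)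
    (hlimS : Tendsto (fun n => πs n Sᶜ) atTop (nhds 0)) :
    ∃ π : Measure (X × X), π.map Prod.fst = μ ∧ π.map Prod.snd = ν ∧ π Sᶜ = 0 := by
  haveI : SecondCountableTopology X := UniformSpace.secondCountable_of_separable X
  have hp : ∀ n, πs n Set.univ = 1 := fun n =>
    (isProbabilityMeasure_of_map_fst (hfst n)).measure_univ
  obtain ⟨U, hUle⟩ := Ultrafilter.exists_le (atTop : Filter ℕ)
  set m : Set (X × X) → ℝ≥0∞ := fun A => (U.map fun n => πs n A).lim with hm_def
  have hm : ∀ A : Set (X × X), Tendsto (fun n => πs n A) ↑U (nhds (m A)) := by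
    intro A
    have := Ultrafilter.le_nhds_lim (U.map fun n => πs n A)
    rwa [Ultrafilter.coe_map] at this
  have hmeq : ∀ {A : Set (X × X)} {a : ℝ≥0∞},
      Tendsto (fun n => πs n A) ↑U (nhds a) → m A = a :=
    fun h => tendsto_nhds_unique (hm _) h
  have hmono : ∀ {A B : Set (X × X)}, A ⊆ B → m A ≤ m B := fun {A B} h =>
    le_of_tendsto_of_tendsto' (hm A) (hm B) fun n => measure_mono h
  have hmuniv : m Set.univ = 1 := hmeq (by simp only [hp]; exact tendsto_const_nhds)
  have hmS : m Sᶜ = 0 := hmeq (hlimS.mono_left hUle)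
  have hmfst : ∀ {A : Set X}, MeasurableSet A → m (A ×ˢ Set.univ) = μ A := by
    intro A hA
    refine hmeq ?_
    have hxx : ∀ n, πs n (A ×ˢ Set.univ) = μ A := fun n => by
      rw [← hfst n, Measure.map_apply measurable_fst hA, Set.prod_univ]
    simp only [hxx]; exact tendsto_const_nhds
  have hmsnd : ∀ {A : Set X}, MeasurableSet A → m (Set.univ ×ˢ A) = ν A := by
    intro A hA
    refine hmeq ?_
    have hxx : ∀ n, πs n (Set.univ ×ˢ A) = ν A := fun n => by
      rw [← hsnd n, Measure.map_apply measurable_snd hA, Set.univ_prod]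
    simp only [hxx]; exact tendsto_const_nhds
  have hadd : ∀ {V A B : Set (X × X)}, MeasurableSet B → Disjoint A B → A ⊆ V → B ⊆ V →
      m A + m B ≤ m V := by
    intro V A B hB hdis hAV hBV
    refine le_of_tendsto_of_tendsto' ((hm A).add (hm B)) (hm V) fun n => ?_
    rw [← measure_union hdis hB]
    exact measure_mono (Set.union_subset hAV hBV)
  -- the candidate content
  set mc : Compacts (X × X) → ℝ≥0∞ :=
    fun K => ⨅ (V : {V : Opens (X × X) // (K : Set (X × X)) ⊆ V}), m V with hmc_def
  have hmc_le : ∀ (K : Compacts (X × X)) {V : Set (X × X)} (hV : IsOpen V),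
      (K : Set (X × X)) ⊆ V → mc K ≤ m V := fun K V hV hKV =>
      iInf_le (fun V : {V : Opens (X × X) // (K : Set (X × X)) ⊆ V} => m V) ⟨⟨V, hV⟩, hKV⟩
  have hle_mc : ∀ K : Compacts (X × X), m K ≤ mc K := fun K => le_iInf fun V => hmono V.2
  have hmc_ne_top : ∀ K, mc K ≠ ⊤ := fun K =>
    (lt_of_le_of_lt ((hmc_le K isOpen_univ (Set.subset_univ _)).trans hmuniv.le)
      ENNReal.one_lt_top).ne
  have hmc_mono : ∀ K₁ K₂ : Compacts (X × X), (K₁ : Set (X × X)) ⊆ K₂ → mc K₁ ≤ mc K₂ :=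
    fun K₁ K₂ h => le_iInf fun V => hmc_le K₁ V.1.2 (h.trans V.2)
  have hmc_sup_le : ∀ K₁ K₂, mc (K₁ ⊔ K₂) ≤ mc K₁ + mc K₂ := by
    intro K₁ K₂
    refine ENNReal.le_of_forall_pos_le_add fun ε hε _ => ?_
    have hhalf : (0 : ℝ≥0∞) < ε / 2 := by
      simp [ENNReal.div_pos_iff, hε.ne']
    obtain ⟨V₁, hV₁⟩ : ∃ V : {V : Opens (X × X) // (K₁ : Set (X × X)) ⊆ V},
        m V < mc K₁ + ε / 2 := by
      have : mc K₁ < mc K₁ + ε / 2 := ENNReal.lt_add_right (hmc_ne_top _) hhalf.ne'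
      exact iInf_lt_iff.mp this
    obtain ⟨V₂, hV₂⟩ : ∃ V : {V : Opens (X × X) // (K₂ : Set (X × X)) ⊆ V},
        m V < mc K₂ + ε / 2 := by
      have : mc K₂ < mc K₂ + ε / 2 := ENNReal.lt_add_right (hmc_ne_top _) hhalf.ne'
      exact iInf_lt_iff.mp this
    have hsub : ((K₁ ⊔ K₂ : Compacts (X × X)) : Set (X × X)) ⊆ ↑V₁.1 ∪ ↑V₂.1 := by
      rw [Compacts.coe_sup]
      exact Set.union_subset_union V₁.2 V₂.2
    have h1 : mc (K₁ ⊔ K₂) ≤ m (↑V₁.1 ∪ ↑V₂.1) := hmc_le _ (V₁.1.2.union V₂.1.2) hsub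
    have h2 : m (↑V₁.1 ∪ ↑V₂.1) ≤ m ↑V₁.1 + m ↑V₂.1 :=
      le_of_tendsto_of_tendsto' (hm _) ((hm _).add (hm _)) fun n => measure_union_le _ _
    calc mc (K₁ ⊔ K₂) ≤ m ↑V₁.1 + m ↑V₂.1 := h1.trans h2
      _ ≤ (mc K₁ + ε / 2) + (mc K₂ + ε / 2) := add_le_add hV₁.le hV₂.le
      _ = mc K₁ + mc K₂ + ε := by
          rw [add_add_add_comm, ENNReal.add_halves]
  have hmc_disj : ∀ K₁ K₂ : Compacts (X × X), Disjoint (K₁ : Set (X × X)) K₂ →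
      mc (K₁ ⊔ K₂) = mc K₁ + mc K₂ := by
    intro K₁ K₂ hdis
    refine le_antisymm (hmc_sup_le K₁ K₂) ?_
    obtain ⟨W₁, W₂, hW₁, hW₂, hKW₁, hKW₂, hWd⟩ :=
      SeparatedNhds.of_isCompact_isCompact_isClosed K₁.2 K₂.2 K₂.2.isClosed hdis
    refine le_iInf fun V => ?_
    have hKV₁ : (K₁ : Set (X × X)) ⊆ ↑V.1 ∩ W₁ :=
      Set.subset_inter ((Set.subset_union_left.trans (le_of_eq (Compacts.coe_sup K₁ K₂).symm)).trans V.2) hKW₁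
    have hKV₂ : (K₂ : Set (X × X)) ⊆ ↑V.1 ∩ W₂ :=
      Set.subset_inter ((Set.subset_union_right.trans (le_of_eq (Compacts.coe_sup K₁ K₂).symm)).trans V.2) hKW₂
    calc mc K₁ + mc K₂ ≤ m (↑V.1 ∩ W₁) + m (↑V.1 ∩ W₂) :=
          add_le_add (hmc_le K₁ (V.1.2.inter hW₁) hKV₁) (hmc_le K₂ (V.1.2.inter hW₂) hKV₂)
      _ ≤ m ↑V.1 := hadd (V.1.2.inter hW₂).measurableSet
          (hWd.mono Set.inter_subset_right Set.inter_subset_right)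
          Set.inter_subset_left Set.inter_subset_left
  set c : Content (X × X) :=
    { toFun := fun K => (mc K).toNNReal
      mono' := fun K₁ K₂ h => ENNReal.toNNReal_mono (hmc_ne_top K₂) (hmc_mono K₁ K₂ h)
      sup_disjoint' := fun K₁ K₂ hd _ _ => by
        show (mc (K₁ ⊔ K₂)).toNNReal = (mc K₁).toNNReal + (mc K₂).toNNReal
        rw [hmc_disj K₁ K₂ hd, ENNReal.toNNReal_add (hmc_ne_top _) (hmc_ne_top _)]
      sup_le' := fun K₁ K₂ => by
        show (mc (K₁ ⊔ K₂)).toNNReal ≤ (mc K₁).toNNReal + (mc K₂).toNNReal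
        rw [← ENNReal.toNNReal_add (hmc_ne_top _) (hmc_ne_top _)]
        exact ENNReal.toNNReal_mono
          (by simp [ENNReal.add_ne_top, hmc_ne_top]) (hmc_sup_le K₁ K₂) } with hc_def
  have hcoe : ∀ K : Compacts (X × X), (c K : ℝ≥0∞) = mc K := fun K =>
    ENNReal.coe_toNNReal (hmc_ne_top K)
  have hopen_le : ∀ {V : Set (X × X)}, IsOpen V → c.measure V ≤ m V := by
    intro V hV
    rw [Content.measure_apply c hV.measurableSet, Content.outerMeasure_of_isOpen c V hV]
    simp only [Content.innerContent]
    exact iSup₂_le fun K hK => le_trans (le_of_eq (hcoe K)) (hmc_le K hV hK)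
  have hopen_ge : ∀ {V : Set (X × X)} (hV : IsOpen V) (K : Compacts (X × X)),
      (K : Set (X × X)) ⊆ V → mc K ≤ c.measure V := by
    intro V hV K hK
    rw [Content.measure_apply c hV.measurableSet, Content.outerMeasure_of_isOpen c V hV]
    exact le_trans (le_of_eq (hcoe K).symm) (c.le_innerContent K ⟨V, hV⟩ hK)
  have hSc : c.measure Sᶜ = 0 := by
    refine le_antisymm ?_ zero_le
    rw [← hmS]
    exact hopen_le hS.isOpen_compl
  -- total mass
  have huniv_le : c.measure Set.univ ≤ 1 := (hopen_le isOpen_univ).trans hmuniv.le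
  haveI : Nonempty X := Measure.nonempty_of_neZero μ
  obtain ⟨x₀⟩ := (inferInstance : Nonempty X)
  have hmono_ball : Monotone fun r : ℕ => Metric.closedBall x₀ (r : ℝ) := fun a b h =>
    Metric.closedBall_subset_closedBall (by exact_mod_cast h)
  have hball_univ : (⋃ r : ℕ, Metric.closedBall x₀ (r : ℝ)) = Set.univ := by
    refine Set.eq_univ_of_forall fun x => Set.mem_iUnion.2 ⟨⌈dist x x₀⌉₊, ?_⟩
    simpa [Metric.mem_closedBall] using Nat.le_ceil (dist x x₀)
  have hballμ : Tendsto (fun r : ℕ => μ (Metric.closedBall x₀ (r : ℝ))) atTop (nhds 1) := by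
    have := tendsto_measure_iUnion_atTop (μ := μ) hmono_ball
    rwa [hball_univ, measure_univ] at this
  have hballν : Tendsto (fun r : ℕ => ν (Metric.closedBall x₀ (r : ℝ))) atTop (nhds 1) := by
    have := tendsto_measure_iUnion_atTop (μ := ν) hmono_ball
    rwa [hball_univ, measure_univ] at this
  have huniv_ge : 1 ≤ c.measure Set.univ := by
    refine ENNReal.le_of_forall_pos_le_add fun ε hε _ => ?_
    have hhalf : (0 : ℝ≥0∞) < ε / 2 := by simp [ENNReal.div_pos_iff, hε.ne']
    have hlt : 1 - (ε : ℝ≥0∞) / 2 < 1 :=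
      ENNReal.sub_lt_self one_ne_top one_ne_zero hhalf.ne'
    obtain ⟨r, hrμ, hrν⟩ : ∃ r : ℕ, 1 - (ε : ℝ≥0∞) / 2 < μ (Metric.closedBall x₀ (r : ℝ)) ∧
        1 - (ε : ℝ≥0∞) / 2 < ν (Metric.closedBall x₀ (r : ℝ)) :=
      ((hballμ.eventually (eventually_gt_nhds hlt)).and
        (hballν.eventually (eventually_gt_nhds hlt))).exists
    set B : Set X := Metric.closedBall x₀ (r : ℝ) with hB_def
    have hcompl_le : ∀ {κ : Measure X}, IsProbabilityMeasure κ →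
        1 - (ε : ℝ≥0∞) / 2 < κ B → κ Bᶜ ≤ ε / 2 := by
      intro κ hκ h
      rw [measure_compl measurableSet_closedBall (measure_ne_top _ _), measure_univ]
      rw [tsub_le_iff_left]
      rcases le_total ((ε : ℝ≥0∞) / 2) 1 with hle | hle
      · calc (1 : ℝ≥0∞) = 1 - ε / 2 + ε / 2 := (tsub_add_cancel_of_le hle).symm
          _ ≤ κ B + ε / 2 := add_le_add_left h.le _
      · exact hle.trans le_add_self
    have hπK : ∀ n, 1 - (ε : ℝ≥0∞) ≤ πs n (B ×ˢ B) := by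
      intro n
      have hc1 : πs n ((B ×ˢ B)ᶜ) ≤ (ε : ℝ≥0∞) := by
        have hsub : (B ×ˢ B)ᶜ ⊆ (Bᶜ ×ˢ Set.univ) ∪ (Set.univ ×ˢ Bᶜ) := by
          intro z hz
          simp only [Set.mem_compl_iff, Set.mem_prod, not_and_or] at hz
          rcases hz with h | h <;> simp [h]
        have h1 : πs n (Bᶜ ×ˢ Set.univ) = μ Bᶜ := by
          rw [← hfst n, Measure.map_apply measurable_fst
            measurableSet_closedBall.compl, Set.prod_univ]
        have h2 : πs n (Set.univ ×ˢ Bᶜ) = ν Bᶜ := by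
          rw [← hsnd n, Measure.map_apply measurable_snd
            measurableSet_closedBall.compl, Set.univ_prod]
        calc πs n ((B ×ˢ B)ᶜ) ≤ πs n (Bᶜ ×ˢ Set.univ) + πs n (Set.univ ×ˢ Bᶜ) :=
              (measure_mono hsub).trans (measure_union_le _ _)
          _ = μ Bᶜ + ν Bᶜ := by rw [h1, h2]
          _ ≤ ε / 2 + ε / 2 := add_le_add (hcompl_le inferInstance hrμ)
              (hcompl_le inferInstance hrν)
          _ = ε := ENNReal.add_halves _
      rw [tsub_le_iff_right]
      calc (1 : ℝ≥0∞) = πs n (B ×ˢ B) + πs n ((B ×ˢ B)ᶜ) := by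
            rw [measure_add_measure_compl
              (measurableSet_closedBall.prod measurableSet_closedBall), hp n]
        _ ≤ πs n (B ×ˢ B) + ε := add_le_add_right hc1 _
    have hmK : 1 - (ε : ℝ≥0∞) ≤ m (B ×ˢ B) := ge_of_tendsto' (hm _) hπK
    have hKc : IsCompact (B ×ˢ B) :=
      (isCompact_closedBall x₀ (r : ℝ)).prod (isCompact_closedBall x₀ (r : ℝ))
    have : 1 - (ε : ℝ≥0∞) ≤ c.measure Set.univ :=
      hmK.trans ((hle_mc ⟨B ×ˢ B, hKc⟩).trans
        (hopen_ge isOpen_univ ⟨B ×ˢ B, hKc⟩ (Set.subset_univ _)))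
    rwa [tsub_le_iff_right] at this
  have huniv : c.measure Set.univ = 1 := le_antisymm huniv_le huniv_ge
  haveI hπprob : IsProbabilityMeasure c.measure := ⟨huniv⟩
  -- first marginal
  have hprod_compl : ∀ A : Set X, (A ×ˢ (Set.univ : Set X))ᶜ = Aᶜ ×ˢ Set.univ := by
    intro A; ext z; simp
  have hprod_compl' : ∀ A : Set X, ((Set.univ : Set X) ×ˢ A)ᶜ = Set.univ ×ˢ Aᶜ := by
    intro A; ext z; simp
  have hup : ∀ {A : Set X}, MeasurableSet A → IsOpen A →
      c.measure (A ×ˢ Set.univ) ≤ μ A := fun hA hAo =>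
    (hopen_le (hAo.prod isOpen_univ)).trans (hmfst hA).le
  have hup' : ∀ {A : Set X}, MeasurableSet A → IsOpen A →
      c.measure (Set.univ ×ˢ A) ≤ ν A := fun hA hAo =>
    (hopen_le (isOpen_univ.prod hAo)).trans (hmsnd hA).le
  have hsplit : ∀ {A : Set X}, MeasurableSet A →
      c.measure (A ×ˢ Set.univ) = 1 - c.measure (Aᶜ ×ˢ Set.univ) := by
    intro A hA
    have := measure_compl (μ := c.measure)
      ((hA.compl.prod MeasurableSet.univ)) (measure_ne_top _ _)
    rw [hprod_compl, compl_compl, measure_univ] at this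
    exact this
  have hsplit' : ∀ {A : Set X}, MeasurableSet A →
      c.measure (Set.univ ×ˢ A) = 1 - c.measure (Set.univ ×ˢ Aᶜ) := by
    intro A hA
    have := measure_compl (μ := c.measure)
      ((MeasurableSet.univ.prod hA.compl)) (measure_ne_top _ _)
    rw [hprod_compl', compl_compl, measure_univ] at this
    exact this
  have hμsplit : ∀ {A : Set X}, MeasurableSet A → μ A = 1 - μ Aᶜ := by
    intro A hA
    rw [measure_compl hA (measure_ne_top _ _), measure_univ,
      ENNReal.sub_sub_cancel one_ne_top prob_le_one]
  have hνsplit : ∀ {A : Set X}, MeasurableSet A → ν A = 1 - ν Aᶜ := by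
    intro A hA
    rw [measure_compl hA (measure_ne_top _ _), measure_univ,
      ENNReal.sub_sub_cancel one_ne_top prob_le_one]
  have hlow_closed : ∀ {F : Set X}, IsClosed F → μ F ≤ c.measure (F ×ˢ Set.univ) := by
    intro F hF
    rw [hμsplit hF.measurableSet, hsplit hF.measurableSet]
    exact tsub_le_tsub_left (hup hF.measurableSet.compl hF.isOpen_compl) 1
  have hlow_closed' : ∀ {F : Set X}, IsClosed F → ν F ≤ c.measure (Set.univ ×ˢ F) := by
    intro F hF
    rw [hνsplit hF.measurableSet, hsplit' hF.measurableSet]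
    exact tsub_le_tsub_left (hup' hF.measurableSet.compl hF.isOpen_compl) 1
  have hlow : ∀ {A : Set X}, MeasurableSet A → μ A ≤ c.measure (A ×ˢ Set.univ) := by
    intro A hA
    refine le_of_forall_lt fun r hr => ?_
    obtain ⟨F, hFA, hFc, hrF⟩ := hA.exists_lt_isClosed_of_ne_top (measure_ne_top _ _) hr
    exact hrF.trans_le ((hlow_closed hFc).trans
      (measure_mono (Set.prod_mono hFA Set.Subset.rfl)))
  have hlow' : ∀ {A : Set X}, MeasurableSet A → ν A ≤ c.measure (Set.univ ×ˢ A) := by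
    intro A hA
    refine le_of_forall_lt fun r hr => ?_
    obtain ⟨F, hFA, hFc, hrF⟩ := hA.exists_lt_isClosed_of_ne_top (measure_ne_top _ _) hr
    exact hrF.trans_le ((hlow_closed' hFc).trans
      (measure_mono (Set.prod_mono Set.Subset.rfl hFA)))
  refine ⟨c.measure, ?_, ?_, hSc⟩
  · refine Measure.ext fun s hs => ?_
    rw [Measure.map_apply measurable_fst hs, ← Set.prod_univ]
    refine le_antisymm ?_ (hlow hs)
    rw [hsplit hs, hμsplit hs]
    exact tsub_le_tsub_left (hlow hs.compl) 1
  · refine Measure.ext fun s hs => ?_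
    rw [Measure.map_apply measurable_snd hs, ← Set.univ_prod]
    refine le_antisymm ?_ (hlow' hs)
    rw [hsplit' hs, hνsplit hs]
    exact tsub_le_tsub_left (hlow' hs.compl) 1

end WTopAux


open Kuwada in
/-- Lemma 3.2: for a continuous `ρ : X × X → [0,∞)`,
`lim_{p → ∞} ρ^W_p (μ, ν) = ρ^W_∞ (μ, ν)` (as an identity in `[0,∞]`). -/
theorem wCost_tendsto_wCost_top
    {X : Type*} [MetricSpace X] [CompleteSpace X] [TopologicalSpace.SeparableSpace X]
    [ProperSpace X] [MeasurableSpace X] [BorelSpace X]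
    (hgeo : GeodesicFor (dist : X → X → ℝ))
    (ρ : X → X → ℝ) (hρcont : Continuous fun z : X × X => ρ z.1 z.2)
    (hρnonneg : ∀ x y, 0 ≤ ρ x y)
    (μ ν : Measure X) (hμ : IsProbabilityMeasure μ) (hν : IsProbabilityMeasure ν) :
    Tendsto (fun p : ℝ => wCost ρ (ENNReal.ofReal p) μ ν) atTop
      (nhds (wCost ρ ∞ μ ν)) := by
  haveI := hμ
  haveI := hν
  have hGm : ∀ π : Measure (X × X), AEStronglyMeasurable (fun z : X × X => ρ z.1 z.2) π :=
    fun π => hρcont.aestronglyMeasurable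
  have hcpl_prob : ∀ π : Measure (X × X), IsCoupling μ ν π → IsProbabilityMeasure π :=
    fun π hπ => isProbabilityMeasure_of_map_fst hπ.1
  have hW_mono : Monotone (fun e : ℝ≥0∞ => wCost ρ e μ ν) := by
    intro p q hpq
    refine iInf_mono fun π => ?_
    refine iInf_mono' fun hπ => ⟨hπ, ?_⟩
    haveI := hcpl_prob π hπ
    exact eLpNorm_le_eLpNorm_of_exponent_le hpq (hGm π)
  have hmonoR : Monotone (fun p : ℝ => wCost ρ (ENNReal.ofReal p) μ ν) :=
    fun p q h => hW_mono (ENNReal.ofReal_le_ofReal h)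
  have hsup : (⨆ p : ℝ, wCost ρ (ENNReal.ofReal p) μ ν) = wCost ρ ∞ μ ν := by
    refine le_antisymm (iSup_le fun p => hW_mono le_top) ?_
    by_contra hcon
    push_neg at hcon
    set L := ⨆ p : ℝ, wCost ρ (ENNReal.ofReal p) μ ν with hL_def
    obtain ⟨b, hLb, hbW⟩ := exists_between hcon
    obtain ⟨cc, hbc, hcW⟩ := exists_between hbW
    have hc_top : cc ≠ ⊤ := ne_top_of_lt hcW
    have hb_top : b ≠ ⊤ := ne_top_of_lt hbc
    have hc_pos : 0 < cc := (zero_le : 0 ≤ b).trans_lt hbc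
    set t : ℝ := cc.toReal with ht_def
    set S : Set (X × X) := {z : X × X | ρ z.1 z.2 ≤ t} with hS_def
    have hS : IsClosed S := isClosed_le hρcont continuous_const
    have hex : ∀ n : ℕ, ∃ π : Measure (X × X), IsCoupling μ ν π ∧
        eLpNorm (fun z : X × X => ρ z.1 z.2) (ENNReal.ofReal ((n : ℝ) + 1)) π < b := by
      intro n
      have h1 : wCost ρ (ENNReal.ofReal ((n : ℝ) + 1)) μ ν < b :=
        lt_of_le_of_lt (le_iSup (fun p : ℝ => wCost ρ (ENNReal.ofReal p) μ ν) ((n : ℝ) + 1)) hLb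
      rw [wCost] at h1
      simpa [iInf_lt_iff] using h1
    choose πs hπs hπlt using hex
    have hbound : ∀ n : ℕ, πs n Sᶜ ≤ (b / cc) ^ ((n : ℝ) + 1) := by
      intro n
      set q : ℝ := (n : ℝ) + 1 with hq_def
      have hq : 0 < q := by positivity
      have he0 : ENNReal.ofReal q ≠ 0 := by
        simp [ENNReal.ofReal_eq_zero, not_le, hq]
      have h1 : (∫⁻ z, ((‖ρ z.1 z.2‖₊ : ℝ≥0∞)) ^ q ∂ (πs n)) ≤ b ^ q := by
        have h2 := (hπlt n).le
        rw [eLpNorm_eq_lintegral_rpow_enorm_toReal he0 ENNReal.ofReal_ne_top,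
          ENNReal.toReal_ofReal hq.le] at h2
        calc (∫⁻ z, ((‖ρ z.1 z.2‖₊ : ℝ≥0∞)) ^ q ∂ (πs n))
            = ((∫⁻ z, ((‖ρ z.1 z.2‖₊ : ℝ≥0∞)) ^ q ∂ (πs n)) ^ (1 / q)) ^ q := by
              rw [← ENNReal.rpow_mul, one_div, inv_mul_cancel₀ hq.ne', ENNReal.rpow_one]
          _ ≤ b ^ q := ENNReal.rpow_le_rpow h2 hq.le
      have h2 : Sᶜ ⊆ {z : X × X | cc ^ q ≤ ((‖ρ z.1 z.2‖₊ : ℝ≥0∞)) ^ q} := by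
        intro z hz
        have hzt : t < ρ z.1 z.2 := not_le.mp hz
        have hcle : cc ≤ ((‖ρ z.1 z.2‖₊ : ℝ≥0∞)) := by
          rw [← enorm_eq_nnnorm, Real.enorm_eq_ofReal (hρnonneg _ _)]
          calc cc = ENNReal.ofReal t := (ENNReal.ofReal_toReal hc_top).symm
            _ ≤ ENNReal.ofReal (ρ z.1 z.2) := ENNReal.ofReal_le_ofReal hzt.le
        exact ENNReal.rpow_le_rpow hcle hq.le
      have hf_meas : AEMeasurable (fun z : X × X => ((‖ρ z.1 z.2‖₊ : ℝ≥0∞)) ^ q) (πs n) :=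
        (hρcont.measurable.enorm.aemeasurable).pow_const _
      have h3 := mul_meas_ge_le_lintegral₀ hf_meas (cc ^ q)
      have h4 : πs n Sᶜ * cc ^ q ≤ b ^ q := by
        rw [mul_comm]
        exact le_trans (mul_le_mul_right (measure_mono h2) _) (h3.trans h1)
      rw [ENNReal.div_rpow_of_nonneg _ _ hq.le]
      refine (ENNReal.le_div_iff_mul_le ?_ ?_).mpr h4
      · exact Or.inl (by simp [ENNReal.rpow_eq_zero_iff, hc_pos.ne', hq, hc_top])
      · exact Or.inl (ENNReal.rpow_ne_top_of_nonneg hq.le hc_top)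
    have hr1 : b / cc < 1 := by
      rw [ENNReal.div_lt_iff (Or.inl hc_pos.ne') (Or.inl hc_top), one_mul]
      exact hbc
    have hpow0 : Tendsto (fun n : ℕ => (b / cc) ^ ((n : ℝ) + 1)) atTop (nhds 0) := by
      have heq : ∀ n : ℕ, (b / cc) ^ ((n : ℝ) + 1) = (b / cc) ^ (n + 1) := by
        intro n
        rw [← ENNReal.rpow_natCast]
        norm_num
      simp only [heq]
      exact (ENNReal.tendsto_pow_atTop_nhds_zero_of_lt_one hr1).comp
        (tendsto_add_atTop_nat 1)
    have hlim0 : Tendsto (fun n => πs n Sᶜ) atTop (nhds 0) :=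
      tendsto_of_tendsto_of_tendsto_of_le_of_le tendsto_const_nhds hpow0
        (fun n => zero_le) hbound
    obtain ⟨π, hπfst, hπsnd, hπS⟩ := exists_coupling_limit μ ν hS πs
      (fun n => (hπs n).1) (fun n => (hπs n).2) hlim0
    haveI := isProbabilityMeasure_of_map_fst hπfst
    have hWle : wCost ρ ∞ μ ν ≤ eLpNorm (fun z : X × X => ρ z.1 z.2) ∞ π := by
      rw [wCost]
      exact iInf₂_le π ⟨hπfst, hπsnd⟩
    have hae : ∀ᵐ z ∂π, z ∈ S := by
      rw [MeasureTheory.ae_iff]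
      exact hπS
    have hess : eLpNorm (fun z : X × X => ρ z.1 z.2) ∞ π ≤ cc := by
      rw [eLpNorm_exponent_top]
      refine essSup_le_of_ae_le cc ?_
      filter_upwards [hae] with z hz
      rw [Real.enorm_eq_ofReal (hρnonneg _ _)]
      calc ENNReal.ofReal (ρ z.1 z.2) ≤ ENNReal.ofReal t := ENNReal.ofReal_le_ofReal hz
        _ ≤ cc := ENNReal.ofReal_toReal_le
    exact absurd (hWle.trans hess) (not_le.mpr hcW)
  have := tendsto_atTop_iSup hmonoR
  rwa [hsup] at this
end
end

section
/- Let ρ: X×X → [0,∞) be a continuous function and μ, ν Borel probability measures on X. If ρ^W_∞(μ,ν) < ∞, then the infimum defining ρ^W_∞(μ,ν) is attained: there exists a coupling π of μ and ν with ‖ρ‖_{L^∞(π)} = ρ^W_∞(μ,ν). -/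
open MeasureTheory ENNReal NNReal Metric Set Filter

noncomputable section

open Topology

section AuxProkhorov

open TopologicalSpace

variable {Y : Type*} [MetricSpace Y] [ProperSpace Y]
  [SecondCountableTopology Y] [MeasurableSpace Y] [BorelSpace Y]

/-- Tightness of a probability measure on a proper, second countable metric space. -/
lemma aux_tight (κ : Measure Y) [IsProbabilityMeasure κ] {ε : ℝ≥0∞} (hε : 0 < ε) :
    ∃ K : Set Y, IsCompact K ∧ κ Kᶜ ≤ ε := by
  rcases le_or_gt 1 ε with h | h
  · exact ⟨∅, isCompact_empty, prob_le_one.trans h⟩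
  · have h1 : (1 : ℝ≥0∞) - ε < κ Set.univ := by
      rw [measure_univ]
      exact ENNReal.sub_lt_self one_ne_top one_ne_zero hε.ne'
    obtain ⟨K, -, hKc, hK⟩ := isOpen_univ.exists_lt_isCompact h1
    refine ⟨K, hKc, ?_⟩
    rw [measure_compl hKc.isClosed.measurableSet (measure_ne_top κ K), measure_univ,
      tsub_le_iff_right]
    calc (1 : ℝ≥0∞) = 1 - ε + ε := (tsub_add_cancel_of_le h.le).symm
    _ ≤ ε + κ K := by rw [add_comm]; exact add_le_add_right hK.le ε

/-- Two probability measures agreeing (in one inequality direction) on all open sets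
are equal. -/
lemma aux_measure_eq {α μ : Measure Y} [IsProbabilityMeasure α] [IsProbabilityMeasure μ]
    (h : ∀ U : Set Y, IsOpen U → μ U ≤ α U) : α = μ := by
  have hclosed : ∀ C : Set Y, IsClosed C → α C ≤ μ C := by
    intro C hC
    have h1 := h Cᶜ hC.isOpen_compl
    rw [measure_compl hC.measurableSet (measure_ne_top _ _),
      measure_compl hC.measurableSet (measure_ne_top _ _), measure_univ, measure_univ] at h1
    calc α C = 1 - (1 - α C) := (ENNReal.sub_sub_cancel one_ne_top prob_le_one).symm
    _ ≤ 1 - (1 - μ C) := tsub_le_tsub_left h1 1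
    _ = μ C := ENNReal.sub_sub_cancel one_ne_top prob_le_one
  have hopen : ∀ U : Set Y, IsOpen U → α U = μ U := by
    intro U hU
    refine le_antisymm ?_ (h U hU)
    by_contra hlt
    push_neg at hlt
    obtain ⟨K, hKU, hKc, hK⟩ := hU.exists_lt_isCompact hlt
    exact absurd ((hK.trans_le (hclosed K hKc.isClosed)).trans_le (measure_mono hKU))
      (lt_irrefl _)
  refine MeasureTheory.ext_of_generate_finite {s : Set Y | IsOpen s} ?_ isPiSystem_isOpen
    (fun s hs => hopen s hs) (by rw [measure_univ, measure_univ])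
  exact BorelSpace.measurable_eq

end AuxProkhorov
open Kuwada in
/-- If `ρ^W_∞ (μ, ν) < ∞` then the infimum defining it is attained by some coupling. -/
theorem wCost_top_attained
    {X : Type*} [MetricSpace X] [CompleteSpace X] [TopologicalSpace.SeparableSpace X]
    [ProperSpace X] [MeasurableSpace X] [BorelSpace X]
    (hgeo : GeodesicFor (dist : X → X → ℝ))
    (ρ : X → X → ℝ) (hρcont : Continuous fun z : X × X => ρ z.1 z.2)
    (hρnonneg : ∀ x y, 0 ≤ ρ x y)
    (μ ν : Measure X) (hμ : IsProbabilityMeasure μ) (hν : IsProbabilityMeasure ν)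
    (hfin : wCost ρ ∞ μ ν < ∞) :
    ∃ π : Measure (X × X), IsCoupling μ ν π ∧
      eLpNorm (fun z => ρ z.1 z.2) ∞ π = wCost ρ ∞ μ ν := by
  classical
  haveI : SecondCountableTopology X :=
    UniformSpace.secondCountable_of_separable X
  have hρm : Measurable fun z : X × X => ρ z.1 z.2 := hρcont.measurable
  -- Step 1: a sequence of near-optimal couplings
  have hex : ∀ n : ℕ, ∃ π : Measure (X × X), IsCoupling μ ν π ∧
      eLpNorm (fun z => ρ z.1 z.2) ∞ π < wCost ρ ∞ μ ν + ENNReal.ofReal (1 / (n + 1)) := by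
    intro n
    have hpos : (0 : ℝ) < 1 / (n + 1) := by positivity
    have hlt : wCost ρ ∞ μ ν < wCost ρ ∞ μ ν + ENNReal.ofReal (1 / (n + 1)) :=
      ENNReal.lt_add_right hfin.ne (ENNReal.ofReal_pos.mpr hpos).ne'
    conv_lhs at hlt => rw [wCost]
    simp only [iInf_lt_iff] at hlt
    obtain ⟨π', h1, h2⟩ := hlt
    exact ⟨π', h1, h2⟩
  choose πs hπs hπlt using hex
  haveI hprob : ∀ n, IsProbabilityMeasure (πs n) := by
    intro n
    have h1 : (πs n) (Prod.fst ⁻¹' Set.univ) = μ Set.univ := by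
      rw [← Measure.map_apply measurable_fst MeasurableSet.univ, (hπs n).1]
    rw [Set.preimage_univ] at h1
    exact ⟨by rw [h1, measure_univ]⟩
  -- Step 2: an ultrafilter limit of the couplings, as a content on compacts
  let u : Ultrafilter ℕ := Ultrafilter.of atTop
  have hu : (u : Filter ℕ) ≤ atTop := Ultrafilter.of_le _
  have hL : ∀ A : Set (X × X), ∃ l : ℝ≥0∞,
      Tendsto (fun n => πs n A) (u : Filter ℕ) (𝓝 l) := by
    intro A
    obtain ⟨l, -, hl⟩ := isCompact_univ.ultrafilter_le_nhds (u.map fun n => πs n A)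
      (by simp)
    rw [Ultrafilter.coe_map] at hl
    exact ⟨l, hl⟩
  choose ell hell using hL
  have hell_le_one : ∀ A, ell A ≤ 1 := fun A =>
    le_of_tendsto (hell A) (Eventually.of_forall fun n => prob_le_one)
  have hell_ne_top : ∀ A, ell A ≠ ⊤ := fun A =>
    ((hell_le_one A).trans_lt one_lt_top).ne
  have hell_mono : ∀ {A B : Set (X × X)}, A ⊆ B → ell A ≤ ell B := fun h =>
    le_of_tendsto_of_tendsto' (hell _) (hell _) fun n => measure_mono h
  let Cnt : Content (X × X) :=
    { toFun := fun K => (ell (K : Set (X × X))).toNNReal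
      mono' := fun K₁ K₂ h => ENNReal.toNNReal_mono (hell_ne_top _) (hell_mono h)
      sup_disjoint' := by
        intro K₁ K₂ hd h₁ h₂
        have hadd : Tendsto (fun n => πs n ((K₁ : Set (X × X)) ∪ (K₂ : Set (X × X))))
            (u : Filter ℕ) (𝓝 (ell (K₁ : Set (X × X)) + ell (K₂ : Set (X × X)))) := by
          refine ((hell (K₁ : Set (X × X))).add (hell (K₂ : Set (X × X)))).congr fun n => ?_
          exact (measure_union hd h₂.measurableSet).symm
        have he : ell ((K₁ ⊔ K₂ : TopologicalSpace.Compacts (X × X)) : Set (X × X)) =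
            ell (K₁ : Set (X × X)) + ell (K₂ : Set (X × X)) :=
          tendsto_nhds_unique (hell _) hadd
        simp only [he, ENNReal.toNNReal_add (hell_ne_top _) (hell_ne_top _)]
      sup_le' := by
        intro K₁ K₂
        have hle : ell ((K₁ ⊔ K₂ : TopologicalSpace.Compacts (X × X)) : Set (X × X)) ≤
            ell (K₁ : Set (X × X)) + ell (K₂ : Set (X × X)) := by
          refine le_of_tendsto_of_tendsto' (hell _)
            ((hell (K₁ : Set (X × X))).add (hell (K₂ : Set (X × X)))) fun n => ?_
          exact measure_union_le _ _
        have h2 := ENNReal.toNNReal_mono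
          (ENNReal.add_ne_top.mpr ⟨hell_ne_top _, hell_ne_top _⟩) hle
        rwa [ENNReal.toNNReal_add (hell_ne_top _) (hell_ne_top _)] at h2 }
  have hCnt : ∀ K : TopologicalSpace.Compacts (X × X), (Cnt K : ℝ≥0∞) = ell K := fun K =>
    ENNReal.coe_toNNReal (hell_ne_top _)
  -- the candidate optimal coupling
  set π : Measure (X × X) := Cnt.measure with hπdef
  have hopen : ∀ U : Set (X × X), IsOpen U →
      π U = ⨆ (K : TopologicalSpace.Compacts (X × X)) (_ : (K : Set (X × X)) ⊆ U),
        ell (K : Set (X × X)) := by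
    intro U hU
    rw [hπdef, Content.measure_apply _ hU.measurableSet, Cnt.outerMeasure_of_isOpen U hU,
      Content.innerContent]
    exact iSup_congr fun K => iSup_congr fun _ => hCnt K
  -- Step 3: lower estimates via the fixed marginals
  have key : ∀ (K₁ K₂ : Set X), IsCompact K₁ → IsCompact K₂ →
      μ K₁ ≤ ell (K₁ ×ˢ K₂) + ν K₂ᶜ := by
    intro K₁ K₂ h₁ h₂
    refine ge_of_tendsto ((hell _).add tendsto_const_nhds)
      (Eventually.of_forall fun n => ?_)
    have hμK : μ K₁ = πs n (K₁ ×ˢ (Set.univ : Set X)) := by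
      rw [← (hπs n).1, Measure.map_apply measurable_fst h₁.isClosed.measurableSet,
        Set.prod_univ]
    have hνK : πs n ((Set.univ : Set X) ×ˢ K₂ᶜ) = ν K₂ᶜ := by
      rw [← (hπs n).2, Measure.map_apply measurable_snd h₂.isClosed.measurableSet.compl,
        Set.univ_prod]
    rw [hμK, ← hνK]
    refine (measure_mono ?_).trans (measure_union_le _ _)
    rintro ⟨x, y⟩ ⟨hx, -⟩
    by_cases hy : y ∈ K₂
    · exact Or.inl ⟨hx, hy⟩
    · exact Or.inr ⟨trivial, hy⟩
  have key' : ∀ (K₁ K₂ : Set X), IsCompact K₁ → IsCompact K₂ →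
      ν K₂ ≤ ell (K₁ ×ˢ K₂) + μ K₁ᶜ := by
    intro K₁ K₂ h₁ h₂
    refine ge_of_tendsto ((hell _).add tendsto_const_nhds)
      (Eventually.of_forall fun n => ?_)
    have hνK : ν K₂ = πs n ((Set.univ : Set X) ×ˢ K₂) := by
      rw [← (hπs n).2, Measure.map_apply measurable_snd h₂.isClosed.measurableSet,
        Set.univ_prod]
    have hμK : πs n (K₁ᶜ ×ˢ (Set.univ : Set X)) = μ K₁ᶜ := by
      rw [← (hπs n).1, Measure.map_apply measurable_fst h₁.isClosed.measurableSet.compl,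
        Set.prod_univ]
    rw [hνK, ← hμK]
    refine (measure_mono ?_).trans (measure_union_le _ _)
    rintro ⟨x, y⟩ ⟨-, hy⟩
    by_cases hx : x ∈ K₁
    · exact Or.inl ⟨hx, hy⟩
    · exact Or.inr ⟨hx, trivial⟩
  have hmarg : ∀ U : Set X, IsOpen U → μ U ≤ π (U ×ˢ (Set.univ : Set X)) := by
    intro U hU
    refine ENNReal.le_of_forall_pos_le_add fun ε hε hfin' => ?_
    have hε2 : (0 : ℝ≥0∞) < (ε : ℝ≥0∞) / 2 :=
      ENNReal.div_pos (by exact_mod_cast hε.ne') (by norm_num)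
    obtain ⟨K₂, hK₂c, hK₂⟩ := aux_tight ν hε2
    rcases le_or_gt (μ U) ((ε : ℝ≥0∞) / 2) with h | h
    · exact h.trans (ENNReal.half_le_self.trans le_add_self)
    · have hlt : μ U - (ε : ℝ≥0∞) / 2 < μ U :=
        ENNReal.sub_lt_self (measure_ne_top μ U) (hε2.trans h).ne' hε2.ne'
      obtain ⟨K₁, hK₁U, hK₁c, hK₁⟩ := hU.exists_lt_isCompact hlt
      have hμU : μ U ≤ μ K₁ + (ε : ℝ≥0∞) / 2 := by
        rw [← tsub_le_iff_right]
        exact hK₁.le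
      have hsup : ell (K₁ ×ˢ K₂) ≤ π (U ×ˢ (Set.univ : Set X)) := by
        rw [hopen _ (hU.prod isOpen_univ)]
        exact le_iSup₂ (f := fun (K : TopologicalSpace.Compacts (X × X))
          (_ : (K : Set (X × X)) ⊆ U ×ˢ (Set.univ : Set X)) => ell (K : Set (X × X)))
          ⟨K₁ ×ˢ K₂, hK₁c.prod hK₂c⟩ (Set.prod_mono hK₁U (Set.subset_univ _))
      calc μ U ≤ μ K₁ + (ε : ℝ≥0∞) / 2 := hμU
      _ ≤ (ell (K₁ ×ˢ K₂) + ν K₂ᶜ) + (ε : ℝ≥0∞) / 2 :=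
        add_le_add_left (key K₁ K₂ hK₁c hK₂c) _
      _ ≤ (π (U ×ˢ (Set.univ : Set X)) + (ε : ℝ≥0∞) / 2) + (ε : ℝ≥0∞) / 2 :=
        add_le_add_left (add_le_add hsup hK₂) _
      _ = π (U ×ˢ (Set.univ : Set X)) + (ε : ℝ≥0∞) := by
        rw [add_assoc, ENNReal.add_halves]
  have hmarg' : ∀ U : Set X, IsOpen U → ν U ≤ π ((Set.univ : Set X) ×ˢ U) := by
    intro U hU
    refine ENNReal.le_of_forall_pos_le_add fun ε hε hfin' => ?_
    have hε2 : (0 : ℝ≥0∞) < (ε : ℝ≥0∞) / 2 :=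
      ENNReal.div_pos (by exact_mod_cast hε.ne') (by norm_num)
    obtain ⟨K₁, hK₁c, hK₁⟩ := aux_tight μ hε2
    rcases le_or_gt (ν U) ((ε : ℝ≥0∞) / 2) with h | h
    · exact h.trans (ENNReal.half_le_self.trans le_add_self)
    · have hlt : ν U - (ε : ℝ≥0∞) / 2 < ν U :=
        ENNReal.sub_lt_self (measure_ne_top ν U) (hε2.trans h).ne' hε2.ne'
      obtain ⟨K₂, hK₂U, hK₂c, hK₂⟩ := hU.exists_lt_isCompact hlt
      have hνU : ν U ≤ ν K₂ + (ε : ℝ≥0∞) / 2 := by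
        rw [← tsub_le_iff_right]
        exact hK₂.le
      have hsup : ell (K₁ ×ˢ K₂) ≤ π ((Set.univ : Set X) ×ˢ U) := by
        rw [hopen _ (isOpen_univ.prod hU)]
        exact le_iSup₂ (f := fun (K : TopologicalSpace.Compacts (X × X))
          (_ : (K : Set (X × X)) ⊆ (Set.univ : Set X) ×ˢ U) => ell (K : Set (X × X)))
          ⟨K₁ ×ˢ K₂, hK₁c.prod hK₂c⟩ (Set.prod_mono (Set.subset_univ _) hK₂U)
      calc ν U ≤ ν K₂ + (ε : ℝ≥0∞) / 2 := hνU
      _ ≤ (ell (K₁ ×ˢ K₂) + μ K₁ᶜ) + (ε : ℝ≥0∞) / 2 :=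
        add_le_add_left (key' K₁ K₂ hK₁c hK₂c) _
      _ ≤ (π ((Set.univ : Set X) ×ˢ U) + (ε : ℝ≥0∞) / 2) + (ε : ℝ≥0∞) / 2 :=
        add_le_add_left (add_le_add hsup hK₁) _
      _ = π ((Set.univ : Set X) ×ˢ U) + (ε : ℝ≥0∞) := by
        rw [add_assoc, ENNReal.add_halves]
  -- Step 4: `π` is a probability measure with the right marginals
  have huniv : π Set.univ = 1 := by
    refine le_antisymm ?_ ?_
    · rw [hopen _ isOpen_univ]
      exact iSup₂_le fun K _ => hell_le_one _
    · have h := hmarg Set.univ isOpen_univ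
      rwa [measure_univ, Set.univ_prod_univ] at h
  haveI : IsProbabilityMeasure π := ⟨huniv⟩
  have hα : π.map Prod.fst = μ := by
    haveI : IsProbabilityMeasure (π.map Prod.fst) :=
      Measure.isProbabilityMeasure_map measurable_fst.aemeasurable
    refine aux_measure_eq fun U hU => ?_
    rw [Measure.map_apply measurable_fst hU.measurableSet, ← Set.prod_univ]
    exact hmarg U hU
  have hβ : π.map Prod.snd = ν := by
    haveI : IsProbabilityMeasure (π.map Prod.snd) :=
      Measure.isProbabilityMeasure_map measurable_snd.aemeasurable
    refine aux_measure_eq fun U hU => ?_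
    rw [Measure.map_apply measurable_snd hU.measurableSet, ← Set.univ_prod]
    exact hmarg' U hU
  -- Step 5: `π` gives no mass to `{ρ > wCost}`
  have hEk : ∀ k : ℕ,
      π {z : X × X | (wCost ρ ∞ μ ν).toReal + 1 / (k + 1) < ρ z.1 z.2} = 0 := by
    intro k
    have hUo : IsOpen {z : X × X | (wCost ρ ∞ μ ν).toReal + 1 / (k + 1) < ρ z.1 z.2} :=
      isOpen_lt continuous_const hρcont
    rw [hopen _ hUo]
    refine le_antisymm (iSup₂_le fun K hK => ?_) zero_le
    rcases Set.eq_empty_or_nonempty (K : Set (X × X)) with hKe | hKne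
    · rw [hKe]
      have h0 : Tendsto (fun n => πs n (∅ : Set (X × X))) (u : Filter ℕ) (𝓝 0) := by
        simpa using (tendsto_const_nhds : Tendsto (fun _ : ℕ => (0 : ℝ≥0∞)) (u : Filter ℕ) _)
      exact le_of_eq (tendsto_nhds_unique (hell _) h0)
    · obtain ⟨z₀, hz₀K, hz₀min⟩ := K.isCompact.exists_isMinOn hKne hρcont.continuousOn
      have hz₀U : (wCost ρ ∞ μ ν).toReal + 1 / (k + 1) < ρ z₀.1 z₀.2 := hK hz₀K
      have hev : ∀ᶠ n in (u : Filter ℕ), πs n (K : Set (X × X)) = 0 := by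
        refine Eventually.filter_mono hu (eventually_atTop.mpr ⟨k, fun n hn => ?_⟩)
        have hae : ∀ᵐ z ∂ πs n, ((‖ρ z.1 z.2‖₊ : ℝ≥0∞)) <
            wCost ρ ∞ μ ν + ENNReal.ofReal (1 / (n + 1)) := by
          have h1 : ∀ᵐ z ∂ πs n, ((‖ρ z.1 z.2‖₊ : ℝ≥0∞)) ≤
              eLpNormEssSup (fun z : X × X => ρ z.1 z.2) (πs n) := ENNReal.ae_le_essSup _
          have h2 := hπlt n
          rw [eLpNorm_exponent_top] at h2
          filter_upwards [h1] with z hz using lt_of_le_of_lt hz h2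
        rw [ae_iff] at hae
        refine measure_mono_null (fun z hzK => ?_) hae
        simp only [Set.mem_setOf_eq, not_lt]
        have hzρ : ρ z₀.1 z₀.2 ≤ ρ z.1 z.2 := hz₀min hzK
        have hn1 : ENNReal.ofReal (1 / (n + 1 : ℝ)) ≤ ENNReal.ofReal (1 / (k + 1 : ℝ)) := by
          refine ENNReal.ofReal_le_ofReal ?_
          refine one_div_le_one_div_of_le (by positivity) ?_
          have : (k : ℝ) ≤ n := by exact_mod_cast hn
          linarith
        calc wCost ρ ∞ μ ν + ENNReal.ofReal (1 / (n + 1 : ℝ))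
            ≤ wCost ρ ∞ μ ν + ENNReal.ofReal (1 / (k + 1 : ℝ)) := add_le_add_right hn1 _
        _ = ENNReal.ofReal ((wCost ρ ∞ μ ν).toReal + 1 / (k + 1 : ℝ)) := by
          rw [ENNReal.ofReal_add ENNReal.toReal_nonneg (by positivity),
            ENNReal.ofReal_toReal hfin.ne]
        _ ≤ ENNReal.ofReal (ρ z.1 z.2) := ENNReal.ofReal_le_ofReal (hz₀U.le.trans hzρ)
        _ = ((‖ρ z.1 z.2‖₊ : ℝ≥0∞)) := (Real.enorm_eq_ofReal (hρnonneg _ _)).symm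
      have h0 : Tendsto (fun n => πs n (K : Set (X × X))) (u : Filter ℕ) (𝓝 0) := by
        refine Tendsto.congr'  (hev.mono fun n h => h.symm)
          (tendsto_const_nhds : Tendsto (fun _ : ℕ => (0 : ℝ≥0∞)) (u : Filter ℕ) _)
      exact le_of_eq (tendsto_nhds_unique (hell _) h0)
  have hEnull : π {z : X × X | (wCost ρ ∞ μ ν).toReal < ρ z.1 z.2} = 0 := by
    refine measure_mono_null (fun z hz => ?_) (measure_iUnion_null fun k : ℕ => hEk k)
    have hz' : (wCost ρ ∞ μ ν).toReal < ρ z.1 z.2 := hz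
    obtain ⟨k, hk⟩ := exists_nat_one_div_lt (sub_pos.mpr hz')
    exact Set.mem_iUnion.mpr ⟨k, by simp only [Set.mem_setOf_eq]; linarith⟩
  -- Step 6: conclude
  have hbound : eLpNorm (fun z : X × X => ρ z.1 z.2) ∞ π ≤ wCost ρ ∞ μ ν := by
    rw [eLpNorm_exponent_top]
    have hae : ∀ᵐ z ∂ π, ‖ρ z.1 z.2‖ ≤ (wCost ρ ∞ μ ν).toReal := by
      rw [ae_iff]
      refine measure_mono_null (fun z hz => ?_) hEnull
      simp only [Set.mem_setOf_eq, not_le] at hz ⊢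
      rwa [Real.norm_eq_abs, abs_of_nonneg (hρnonneg _ _)] at hz
    exact (eLpNormEssSup_le_of_ae_bound hae).trans
      (le_of_eq (ENNReal.ofReal_toReal hfin.ne))
  refine ⟨π, ⟨hα, hβ⟩, le_antisymm hbound ?_⟩
  rw [wCost]
  exact iInf_le_of_le π (iInf_le _ ⟨hα, hβ⟩)
end
end

section
/- Let p, p' ∈ [1,∞] with p > p'. If condition (C_p) holds, then condition (C_{p'}) holds. -/
open MeasureTheory ENNReal NNReal Metric Set Filter

noncomputable section

section KuwadaAux

open Kuwada

set_option linter.unusedSectionVars false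

variable {X : Type*} [MetricSpace X] [MeasurableSpace X] [BorelSpace X]

private lemma aux_dt_nonneg {dt : X → X → ℝ} (hdt : IsContDist dt) (x y : X) : 0 ≤ dt x y := by
  have h := hdt.triangle x y x
  rw [(hdt.eq_zero_iff x x).mpr rfl, hdt.symm y x] at h
  linarith

private def aux_probKer (P : X → Measure X) (hprob : ∀ x, IsProbabilityMeasure (P x)) :
    X → ProbabilityMeasure X := fun x => ⟨P x, hprob x⟩

private lemma aux_measurable_P [TopologicalSpace.SeparableSpace X]
    (P : X → Measure X) (hprob : ∀ x, IsProbabilityMeasure (P x))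
    (hweak : WeaklyContinuous P) : Measurable P := by
  have hPc : Continuous (aux_probKer P hprob) := by
    rw [continuous_iff_continuousAt]
    intro x
    rw [ContinuousAt, MeasureTheory.ProbabilityMeasure.tendsto_iff_forall_integral_tendsto]
    intro f
    exact (hweak f).continuousAt
  have hopen : ∀ U : Set X, IsOpen U → Measurable (fun x => P x U) := by
    intro U hU
    have hlsc : LowerSemicontinuous (fun x => P x U) := by
      intro x c hc
      have h2 := ProbabilityMeasure.le_liminf_measure_open_of_tendsto (hPc.tendsto x) hU
      exact eventually_lt_of_lt_liminf (lt_of_lt_of_le hc h2)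
    exact hlsc.measurable
  rw [Measure.measurable_measure]
  intro s hs
  refine MeasurableSpace.induction_on_inter (C := fun s _ => Measurable fun b => P b s)
    (show _ = MeasurableSpace.generateFrom {s : Set X | IsOpen s} from BorelSpace.measurable_eq)
    ?_ ?_ ?_ ?_ ?_ s hs
  · exact fun s hs t ht _ => hs.inter ht
  · simp
  · exact fun t ht => hopen t ht
  · intro t htm hm
    have heq : (fun b => P b tᶜ) = fun b => 1 - P b t := by
      funext b
      exact prob_compl_eq_one_sub htm
    rw [heq]
    exact Measurable.const_sub hm 1
  · intro f hdisj hfm hm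
    have heq : (fun b => P b (⋃ i, f i)) = fun b => ∑' i, P b (f i) := by
      funext b; exact measure_iUnion hdisj hfm
    rw [heq]
    exact Measurable.ennreal_tsum hm

private lemma aux_partition [TopologicalSpace.SeparableSpace X] [Nonempty X]
    (dt : X → X → ℝ) (hdt : IsContDist dt) {δ : ℝ} (hδ : 0 < δ) :
    ∃ A : ℕ → Set X, (∀ n, MeasurableSet (A n)) ∧ Pairwise (Function.onFun Disjoint A) ∧
      (⋃ n, A n) = univ ∧ ∀ n, ∀ x ∈ A n, ∀ y ∈ A n, dt x y ≤ δ := by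
  have hr : ∀ x : X, ∃ r : ℝ, 0 < r ∧ ∀ y ∈ ball x r, dt x y ≤ δ / 2 := by
    intro x
    have hc : ContinuousAt (fun y => dt x y) x := by
      have : Continuous fun y => dt x y := hdt.cont.comp (Continuous.prodMk_right x)
      exact this.continuousAt
    rw [Metric.continuousAt_iff] at hc
    obtain ⟨r, hr0, hr⟩ := hc (δ / 2) (by linarith)
    refine ⟨r, hr0, fun y hy => ?_⟩
    have h2 := hr (mem_ball.mp hy)
    rw [(hdt.eq_zero_iff x x).mpr rfl, Real.dist_eq, sub_zero,
      abs_of_nonneg (aux_dt_nonneg hdt x y)] at h2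
    linarith
  choose r hr0 hrb using hr
  haveI : SecondCountableTopology X := UniformSpace.secondCountable_of_separable X
  obtain ⟨T, hTc, hTu⟩ := TopologicalSpace.isOpen_iUnion_countable
    (fun x : X => ball x (r x)) (fun x => isOpen_ball)
  have huniv : ⋃ x ∈ T, ball x (r x) = univ := by
    rw [hTu]; apply eq_univ_of_forall; intro x
    exact mem_iUnion.mpr ⟨x, mem_ball_self (hr0 x)⟩
  have hTne : T.Nonempty := by
    by_contra hT
    rw [not_nonempty_iff_eq_empty] at hT
    have hx : (Nonempty.some ‹Nonempty X› : X) ∈ ⋃ x ∈ T, ball x (r x) :=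
      huniv ▸ mem_univ _
    simp [hT] at hx
  obtain ⟨g, hg⟩ := hTc.exists_eq_range hTne
  set B : ℕ → Set X := fun n => ball (g n) (r (g n)) with hB
  refine ⟨disjointed B, fun n => MeasurableSet.disjointed (fun m => measurableSet_ball) n,
    disjoint_disjointed B, ?_, ?_⟩
  · rw [iUnion_disjointed]
    rw [← huniv, hg]
    ext z; simp [B]
  · intro n x hx y hy
    have hx' := disjointed_subset B n hx
    have hy' := disjointed_subset B n hy
    calc dt x y ≤ dt x (g n) + dt (g n) y := hdt.triangle _ _ _
      _ ≤ δ / 2 + δ / 2 := by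
          rw [hdt.symm x (g n)]
          exact add_le_add (hrb _ _ hx') (hrb _ _ hy')
      _ = δ := by ring

private lemma aux_coupling_prob {μ ν : Measure X} [IsProbabilityMeasure μ] {π : Measure (X × X)}
    (hπ : IsCoupling μ ν π) : IsProbabilityMeasure π := by
  constructor
  have h := congrArg (fun m : Measure X => m univ) hπ.1
  rw [Measure.map_apply measurable_fst MeasurableSet.univ, preimage_univ] at h
  rw [h]; exact measure_univ

private lemma aux_bind_prob {P : X → Measure X} (hPm : Measurable P)
    (hprob : ∀ x, IsProbabilityMeasure (P x)) (μ : Measure X) [IsProbabilityMeasure μ] :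
    IsProbabilityMeasure (μ.bind P) := by
  constructor
  rw [Measure.bind_apply MeasurableSet.univ hPm.aemeasurable]
  have h : ∀ x, P x univ = 1 := fun x => (hprob x).measure_univ
  simp [h]

private lemma aux_smul_bind {P : X → Measure X} (hPm : Measurable P) (c : ℝ≥0∞)
    (m : Measure X) : (c • m).bind P = c • (m.bind P) := by
  ext s hs
  rw [Measure.bind_apply hs hPm.aemeasurable, lintegral_smul_measure, Measure.smul_apply,
    Measure.bind_apply hs hPm.aemeasurable, smul_eq_mul]

private lemma aux_sum_bind {ι : Type*} [Countable ι] {P : X → Measure X} (hPm : Measurable P)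
    (m : ι → Measure X) : (Measure.sum m).bind P = Measure.sum fun i => (m i).bind P := by
  ext s hs
  rw [Measure.bind_apply hs hPm.aemeasurable, lintegral_sum_measure,
    Measure.sum_apply _ hs]
  exact tsum_congr fun i => (Measure.bind_apply hs hPm.aemeasurable).symm

private lemma aux_map_sum {α β : Type*} [MeasurableSpace α] [MeasurableSpace β]
    {ι : Type*} [Countable ι] (m : ι → Measure α) (f : α → β) (hf : Measurable f) :
    (Measure.sum m).map f = Measure.sum fun i => (m i).map f := by
  ext s hs
  rw [Measure.map_apply hf hs, Measure.sum_apply _ (hf hs), Measure.sum_apply _ hs]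
  exact tsum_congr fun i => (Measure.map_apply hf hs).symm

private lemma aux_wCost_mono [TopologicalSpace.SeparableSpace X] {μ ν : Measure X} [IsProbabilityMeasure μ]
    {p p' : ℝ≥0∞} (hpq : p' ≤ p) :
    wCost dist p' μ ν ≤ wCost dist p μ ν := by
  haveI : SecondCountableTopology X := UniformSpace.secondCountable_of_separable X
  refine le_iInf₂ fun π hπ => ?_
  haveI := aux_coupling_prob hπ
  refine iInf₂_le_of_le π hπ ?_
  exact eLpNorm_le_eLpNorm_of_exponent_le hpq continuous_dist.aestronglyMeasurable

private lemma aux_key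
    {X : Type*} [MetricSpace X] [TopologicalSpace.SeparableSpace X]
    [MeasurableSpace X] [BorelSpace X] [Nonempty X]
    (dt : X → X → ℝ) (hdt : IsContDist dt)
    (P : X → Measure X) (hprob : ∀ x, IsProbabilityMeasure (P x)) (hPm : Measurable P)
    (p p' : ℝ≥0∞) (hp' : 1 ≤ p') (hpp' : p' < p)
    (hC : CondC P dt p)
    (μ ν : Measure X) (hμ : IsProbabilityMeasure μ) (hν : IsProbabilityMeasure ν)
    (π : Measure (X × X)) (hπ : IsCoupling μ ν π)
    {η : ℝ} (hη : 0 < η) :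
    wCost dist p' (μ.bind P) (ν.bind P)
      ≤ eLpNorm (fun z : X × X => dt z.1 z.2) p' π + ENNReal.ofReal η := by
  haveI := hμ; haveI := hν
  haveI : SecondCountableTopology X := UniformSpace.secondCountable_of_separable X
  haveI := aux_coupling_prob hπ
  have hp'0 : p' ≠ 0 := (lt_of_lt_of_le zero_lt_one hp').ne'
  have hp'top : p' ≠ ⊤ := (lt_of_lt_of_le hpp' le_top).ne
  have hq0 : 0 < p'.toReal := ENNReal.toReal_pos hp'0 hp'top
  have hδ0 : 0 < η / 8 := by positivity
  have hε0 : 0 < η / 2 := by positivity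
  obtain ⟨A, hAm, hAd, hAu, hAdiam⟩ := aux_partition dt hdt hδ0
  set cell : ℕ × ℕ → Set (X × X) := fun ij => A ij.1 ×ˢ A ij.2 with hcelldef
  have hcellm : ∀ ij, MeasurableSet (cell ij) := fun ij => (hAm _).prod (hAm _)
  have hcelld : Pairwise (Function.onFun Disjoint cell) := by
    intro ij kl hne
    rw [Function.onFun, Set.disjoint_left]
    intro z hz1 hz2
    apply hne
    have h1 : ij.1 = kl.1 := by
      by_contra h
      exact Set.disjoint_left.mp (hAd h) hz1.1 hz2.1
    have h2 : ij.2 = kl.2 := by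
      by_contra h
      exact Set.disjoint_left.mp (hAd h) hz1.2 hz2.2
    exact Prod.ext h1 h2
  have hcellU : (⋃ ij, cell ij) = univ := by
    apply eq_univ_of_forall
    intro z
    have h1 : z.1 ∈ ⋃ n, A n := hAu ▸ mem_univ _
    have h2 : z.2 ∈ ⋃ n, A n := hAu ▸ mem_univ _
    obtain ⟨i, hi⟩ := mem_iUnion.mp h1
    obtain ⟨j, hj⟩ := mem_iUnion.mp h2
    exact mem_iUnion.mpr ⟨(i, j), hi, hj⟩
  have hπsum : π = Measure.sum fun ij => π.restrict (cell ij) := by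
    conv_lhs => rw [← Measure.restrict_univ (μ := π), ← hcellU]
    exact Measure.restrict_iUnion hcelld hcellm
  -- per-cell good couplings
  have hcellkey : ∀ ij : ℕ × ℕ, ∃ κ : Measure (X × X),
      κ.map Prod.fst = ((π.restrict (cell ij)).map Prod.fst).bind P ∧
      κ.map Prod.snd = ((π.restrict (cell ij)).map Prod.snd).bind P ∧
      ∫⁻ z, (‖dist z.1 z.2‖₊ : ℝ≥0∞) ^ p'.toReal ∂κ
        ≤ ∫⁻ z in cell ij, ENNReal.ofReal (dt z.1 z.2 + η) ^ p'.toReal ∂π := by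
    intro ij
    rcases eq_or_ne (π (cell ij)) 0 with hc | hc
    · refine ⟨0, ?_, ?_, ?_⟩ <;>
        simp [Measure.restrict_eq_zero.mpr hc, Measure.bind_zero_left,
          lintegral_zero_measure, zero_le]
    · have hctop : π (cell ij) ≠ ⊤ := (lt_of_le_of_lt prob_le_one one_lt_top).ne
      set πb : Measure (X × X) := (π (cell ij))⁻¹ • π.restrict (cell ij) with hπbdef
      haveI hπbprob : IsProbabilityMeasure πb := by
        constructor
        rw [hπbdef, Measure.smul_apply, Measure.restrict_apply_univ, smul_eq_mul]
        exact ENNReal.inv_mul_cancel hc hctop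
      have hcellne : (cell ij).Nonempty :=
        Set.nonempty_iff_ne_empty.mpr (fun h => hc (by rw [h]; exact measure_empty))
      obtain ⟨w, hw⟩ := hcellne
      have hdtw := aux_dt_nonneg hdt w.1 w.2
      have hptU : ∀ z ∈ cell ij, dt z.1 z.2 ≤ dt w.1 w.2 + 2 * (η / 8) := by
        intro z hz
        have t1 := hdt.triangle z.1 w.1 z.2
        have t2 := hdt.triangle w.1 w.2 z.2
        have d1 : dt z.1 w.1 ≤ η / 8 := hAdiam ij.1 z.1 hz.1 w.1 hw.1
        have d2 : dt w.2 z.2 ≤ η / 8 := hAdiam ij.2 w.2 hw.2 z.2 hz.2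
        linarith
      have hptL : ∀ z ∈ cell ij, dt w.1 w.2 ≤ dt z.1 z.2 + 2 * (η / 8) := by
        intro z hz
        have t1 := hdt.triangle w.1 z.1 w.2
        have t2 := hdt.triangle z.1 z.2 w.2
        have d1 : dt w.1 z.1 ≤ η / 8 := hAdiam ij.1 w.1 hw.1 z.1 hz.1
        have d2 : dt z.2 w.2 ≤ η / 8 := hAdiam ij.2 z.2 hz.2 w.2 hw.2
        linarith
      have hae : ∀ᵐ z ∂πb, z ∈ cell ij := by
        rw [ae_iff]
        have heq : {z : X × X | ¬ z ∈ cell ij} = (cell ij)ᶜ := rfl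
        rw [heq, hπbdef, Measure.smul_apply, Measure.restrict_apply (hcellm ij).compl,
          compl_inter_self, measure_empty, smul_eq_mul, mul_zero]
      have hbound : ∀ᵐ z ∂πb, ‖dt z.1 z.2‖ ≤ dt w.1 w.2 + 2 * (η / 8) := by
        refine hae.mono fun z hz => ?_
        rw [Real.norm_eq_abs, abs_of_nonneg (aux_dt_nonneg hdt _ _)]
        exact hptU z hz
      have h1 : eLpNorm (fun z : X × X => dt z.1 z.2) p πb
          ≤ ENNReal.ofReal (dt w.1 w.2 + 2 * (η / 8)) := by
        have h := eLpNorm_le_of_ae_bound (p := p) hbound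
        rwa [measure_univ, ENNReal.one_rpow, one_mul] at h
      haveI : IsProbabilityMeasure (πb.map (Prod.fst : X × X → X)) :=
        Measure.isProbabilityMeasure_map measurable_fst.aemeasurable
      haveI : IsProbabilityMeasure (πb.map (Prod.snd : X × X → X)) :=
        Measure.isProbabilityMeasure_map measurable_snd.aemeasurable
      haveI : IsProbabilityMeasure ((πb.map (Prod.fst : X × X → X)).bind P) :=
        aux_bind_prob hPm hprob _
      haveI : IsProbabilityMeasure ((πb.map (Prod.snd : X × X → X)).bind P) :=
        aux_bind_prob hPm hprob _
      have h2 : wCost dt p (πb.map Prod.fst) (πb.map Prod.snd)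
          ≤ eLpNorm (fun z : X × X => dt z.1 z.2) p πb :=
        iInf₂_le πb ⟨rfl, rfl⟩
      have h3 := hC (πb.map Prod.fst) (πb.map Prod.snd) ‹_› ‹_›
      have h4 : wCost dist p' ((πb.map Prod.fst).bind P) ((πb.map Prod.snd).bind P)
          ≤ wCost dist p ((πb.map Prod.fst).bind P) ((πb.map Prod.snd).bind P) :=
        aux_wCost_mono hpp'.le
      have h5 : wCost dist p' ((πb.map Prod.fst).bind P) ((πb.map Prod.snd).bind P)
          < ENNReal.ofReal (dt w.1 w.2 + 2 * (η / 8)) + ENNReal.ofReal (η / 2) :=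
        lt_of_le_of_lt (h4.trans (h3.trans (h2.trans h1)))
          (ENNReal.lt_add_right ENNReal.ofReal_ne_top (ENNReal.ofReal_pos.mpr hε0).ne')
      rw [wCost, iInf_lt_iff] at h5
      obtain ⟨κ₀, h5⟩ := h5
      rw [iInf_lt_iff] at h5
      obtain ⟨hκ₀c, hκ₀⟩ := h5
      refine ⟨π (cell ij) • κ₀, ?_, ?_, ?_⟩
      · rw [Measure.map_smul, hκ₀c.1, hπbdef, Measure.map_smul, aux_smul_bind hPm, smul_smul,
          ENNReal.mul_inv_cancel hc hctop, one_smul]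
      · rw [Measure.map_smul, hκ₀c.2, hπbdef, Measure.map_smul, aux_smul_bind hPm, smul_smul,
          ENNReal.mul_inv_cancel hc hctop, one_smul]
      · rw [lintegral_smul_measure]
        have hle : eLpNorm (fun z : X × X => dist z.1 z.2) p' κ₀
            ≤ ENNReal.ofReal (dt w.1 w.2 + 2 * (η / 8) + η / 2) := by
          rw [ENNReal.ofReal_add (by linarith) hε0.le]
          exact hκ₀.le
        have hint : ∫⁻ z, (‖dist z.1 z.2‖₊ : ℝ≥0∞) ^ p'.toReal ∂κ₀
            ≤ ENNReal.ofReal (dt w.1 w.2 + 2 * (η / 8) + η / 2) ^ p'.toReal := by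
          have h6 := ENNReal.rpow_le_rpow hle hq0.le
          rwa [eLpNorm_eq_lintegral_rpow_enorm_toReal hp'0 hp'top, ← ENNReal.rpow_mul,
            one_div, inv_mul_cancel₀ hq0.ne', ENNReal.rpow_one] at h6
        have hmeas : Measurable fun z : X × X =>
            ENNReal.ofReal (dt z.1 z.2 + η) ^ p'.toReal :=
          (ENNReal.continuous_rpow_const.comp
            (ENNReal.continuous_ofReal.comp (hdt.cont.add continuous_const))).measurable
        calc π (cell ij) * ∫⁻ z, (‖dist z.1 z.2‖₊ : ℝ≥0∞) ^ p'.toReal ∂κ₀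
            ≤ π (cell ij) * ENNReal.ofReal (dt w.1 w.2 + 2 * (η / 8) + η / 2) ^ p'.toReal :=
              mul_le_mul_right hint _
          _ = ∫⁻ _ in cell ij,
                ENNReal.ofReal (dt w.1 w.2 + 2 * (η / 8) + η / 2) ^ p'.toReal ∂π := by
              rw [setLIntegral_const, mul_comm]
          _ ≤ ∫⁻ z in cell ij, ENNReal.ofReal (dt z.1 z.2 + η) ^ p'.toReal ∂π := by
              refine setLIntegral_mono hmeas fun z hz => ?_
              refine ENNReal.rpow_le_rpow (ENNReal.ofReal_le_ofReal ?_) hq0.le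
              have := hptL z hz
              linarith
  choose κ hκf hκs hκcost using hcellkey
  have hσf : (Measure.sum κ).map Prod.fst = μ.bind P := by
    rw [aux_map_sum κ Prod.fst measurable_fst]
    rw [show (fun ij => (κ ij).map Prod.fst)
        = fun ij => ((π.restrict (cell ij)).map Prod.fst).bind P from funext hκf]
    rw [← aux_sum_bind hPm, ← aux_map_sum _ _ measurable_fst, ← hπsum, hπ.1]
  have hσs : (Measure.sum κ).map Prod.snd = ν.bind P := by
    rw [aux_map_sum κ Prod.snd measurable_snd]
    rw [show (fun ij => (κ ij).map Prod.snd)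
        = fun ij => ((π.restrict (cell ij)).map Prod.snd).bind P from funext hκs]
    rw [← aux_sum_bind hPm, ← aux_map_sum _ _ measurable_snd, ← hπsum, hπ.2]
  have hstep : wCost dist p' (μ.bind P) (ν.bind P)
      ≤ eLpNorm (fun z : X × X => dist z.1 z.2) p' (Measure.sum κ) :=
    iInf₂_le (Measure.sum κ) ⟨hσf, hσs⟩
  refine hstep.trans ?_
  have hcost : ∫⁻ z, (‖dist z.1 z.2‖₊ : ℝ≥0∞) ^ p'.toReal ∂(Measure.sum κ)
      ≤ ∫⁻ z, ENNReal.ofReal (dt z.1 z.2 + η) ^ p'.toReal ∂π := by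
    rw [lintegral_sum_measure]
    have heq : ∫⁻ z, ENNReal.ofReal (dt z.1 z.2 + η) ^ p'.toReal ∂π
        = ∑' ij, ∫⁻ z in cell ij, ENNReal.ofReal (dt z.1 z.2 + η) ^ p'.toReal ∂π := by
      conv_lhs => rw [hπsum]
      rw [lintegral_sum_measure]
    rw [heq]
    exact ENNReal.tsum_le_tsum hκcost
  have e2 : eLpNorm (fun z : X × X => dist z.1 z.2) p' (Measure.sum κ)
      ≤ eLpNorm ((fun z : X × X => dt z.1 z.2) + fun _ => η) p' π := by
    rw [eLpNorm_eq_lintegral_rpow_enorm_toReal hp'0 hp'top,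
      eLpNorm_eq_lintegral_rpow_enorm_toReal hp'0 hp'top]
    have heq : (fun z : X × X =>
        (‖(((fun z : X × X => dt z.1 z.2) + fun _ => η : X × X → ℝ)) z‖ₑ : ℝ≥0∞) ^ p'.toReal)
        = fun z : X × X => ENNReal.ofReal (dt z.1 z.2 + η) ^ p'.toReal := by
      funext z
      rw [Pi.add_apply]
      rw [Real.enorm_eq_ofReal (by have := aux_dt_nonneg hdt z.1 z.2; linarith)]
    rw [heq]
    exact ENNReal.rpow_le_rpow hcost (by positivity)
  refine e2.trans ?_
  have e3 := eLpNorm_add_le (hdt.cont.aestronglyMeasurable)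
    (aestronglyMeasurable_const : AEStronglyMeasurable (fun _ : X × X => η) π) hp'
  refine e3.trans ?_
  rw [eLpNorm_const _ hp'0 (IsProbabilityMeasure.ne_zero π), measure_univ,
    ENNReal.one_rpow, mul_one, Real.enorm_eq_ofReal hη.le]

end KuwadaAux

open Kuwada in
/-- Corollary 3.4: `(C_p)` implies `(C_{p'})` whenever `1 ≤ p' < p ≤ ∞`. -/
theorem condC_mono
    {X : Type*} [MetricSpace X] [CompleteSpace X] [TopologicalSpace.SeparableSpace X]
    [ProperSpace X] [MeasurableSpace X] [BorelSpace X]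
    (hgeo : GeodesicFor (dist : X → X → ℝ))
    (dt : X → X → ℝ) (hdt : IsContDist dt) (hdtgeo : GeodesicFor dt)
    (P : X → Measure X) (hprob : ∀ x, IsProbabilityMeasure (P x))
    (hweak : WeaklyContinuous P)
    (p p' : ℝ≥0∞) (hp' : 1 ≤ p') (hpp' : p' < p)
    (hC : CondC P dt p) :
    CondC P dt p' := by
  have hPm : Measurable P := aux_measurable_P P hprob hweak
  intro μ ν hμ hν
  haveI := hμ; haveI := hν
  rcases isEmpty_or_nonempty X with hX | hX
  · have h1 := hμ.measure_univ
    rw [Set.univ_eq_empty_iff.mpr hX, measure_empty] at h1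
    exact absurd h1 zero_ne_one
  apply ENNReal.le_of_forall_pos_le_add
  intro εnn hεnn hlt
  have hhalf : 0 < (εnn : ℝ) / 2 := by positivity
  have h7 : wCost dt p' μ ν < wCost dt p' μ ν + ENNReal.ofReal ((εnn : ℝ) / 2) :=
    ENNReal.lt_add_right hlt.ne (ENNReal.ofReal_pos.mpr hhalf).ne'
  conv_lhs at h7 => rw [wCost]
  rw [iInf_lt_iff] at h7
  obtain ⟨π, h7⟩ := h7
  rw [iInf_lt_iff] at h7
  obtain ⟨hπc, hπval⟩ := h7
  have hkey := aux_key dt hdt P hprob hPm p p' hp' hpp' hC μ ν hμ hν π hπc hhalf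
  refine hkey.trans ?_
  calc eLpNorm (fun z : X × X => dt z.1 z.2) p' π + ENNReal.ofReal ((εnn : ℝ) / 2)
      ≤ wCost dt p' μ ν + ENNReal.ofReal ((εnn : ℝ) / 2) + ENNReal.ofReal ((εnn : ℝ) / 2) :=
        add_le_add_left hπval.le _
    _ = wCost dt p' μ ν + εnn := by
        rw [add_assoc, ← ENNReal.ofReal_add (by positivity) (by positivity), add_halves,
          ENNReal.ofReal_coe_nnreal]
end
end
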